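/- arXiv:cs/0207028 — 10 statements merged into one kernel-verified Lean document; each statement's English description precedes it below -/
import Mathlib

section
/- For every integer k ≥ 1 and every feasible solution (α, d, f) of the first factor-revealing LP, the objective value satisfies Σ_{j=1}^{k} α_j ≤ 1.861 · (f + Σ_{j=1}^{k} d_j). In particular, the optimal value z_k of the first factor-revealing LP is at most 1.861 for every k. -/
/-- Feasibility for the first factor-revealing LP with `k` indices `1,…,k`. -/
def FRLP1Feasible (k : ℕ) (α d : ℕ → ℝ) (f : ℝ) : Prop :=
  (∀ j ∈ Finset.Icc 1 k, 0 ≤ α j) ∧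
  (∀ j ∈ Finset.Icc 1 k, 0 ≤ d j) ∧
  0 ≤ f ∧
  (∀ j, 1 ≤ j → j < k → α j ≤ α (j + 1)) ∧
  (∀ j ∈ Finset.Icc 1 k, ∀ l ∈ Finset.Icc 1 k, α j ≤ α l + d j + d l) ∧
  (∀ j ∈ Finset.Icc 1 k, ∑ l ∈ Finset.Icc j k, max (α j - d l) 0 ≤ f)

namespace FRLP1aux

noncomputable def Blk (x : ℕ → ℝ) (a b : ℕ) : ℝ := ∑ j ∈ Finset.Ioc a b, x j

lemma blk_split (x : ℕ → ℝ) {a b c : ℕ} (hab : a ≤ b) (hbc : b ≤ c) :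
    Blk x a b + Blk x b c = Blk x a c :=
  Finset.sum_Ioc_consecutive x hab hbc

lemma blk_nonneg {x : ℕ → ℝ} {k : ℕ} (h : ∀ j ∈ Finset.Icc 1 k, 0 ≤ x j)
    {a b : ℕ} (hbk : b ≤ k) : 0 ≤ Blk x a b :=
  Finset.sum_nonneg fun j hj => h j (Finset.mem_Icc.mpr (by
    have := Finset.mem_Ioc.mp hj; omega))

lemma tail_pt {k : ℕ} {α d : ℕ → ℝ} {f : ℝ}
    (hsum : ∀ j ∈ Finset.Icc 1 k, ∑ l ∈ Finset.Icc j k, max (α j - d l) 0 ≤ f)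
    {j a b : ℕ} (hj1 : 1 ≤ j) (hjk : j ≤ k) (hja : j ≤ a + 1) (hbk : b ≤ k) :
    ∑ l ∈ Finset.Ioc a b, (α j - d l) ≤ f := by
  calc ∑ l ∈ Finset.Ioc a b, (α j - d l)
      ≤ ∑ l ∈ Finset.Ioc a b, max (α j - d l) 0 :=
        Finset.sum_le_sum fun l _ => le_max_left _ _
    _ ≤ ∑ l ∈ Finset.Icc j k, max (α j - d l) 0 := by
        apply Finset.sum_le_sum_of_subset_of_nonneg
        · intro l hl
          have := Finset.mem_Ioc.mp hl
          exact Finset.mem_Icc.mpr (by omega)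
        · intro l _ _; exact le_max_right _ _
    _ ≤ f := hsum j (Finset.mem_Icc.mpr ⟨hj1, hjk⟩)

lemma tail_block {k : ℕ} {α d : ℕ → ℝ} {f : ℝ}
    (hsum : ∀ j ∈ Finset.Icc 1 k, ∑ l ∈ Finset.Icc j k, max (α j - d l) 0 ≤ f)
    {n c a L : ℕ} (hca : c + n ≤ a) (hak : a + L * n ≤ k) :
    ((L : ℝ) * n) * Blk α c (c + n) ≤ (n : ℝ) * f + (n : ℝ) * Blk d a (a + L * n) := by
  have key : ∀ j ∈ Finset.Ioc c (c + n),
      ((L : ℝ) * n) * α j ≤ f + Blk d a (a + L * n) := by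
    intro j hj
    have hjm := Finset.mem_Ioc.mp hj
    have h1 : ∑ l ∈ Finset.Ioc a (a + L * n), (α j - d l) ≤ f :=
      tail_pt hsum (by omega) (by omega) (by omega) (by omega)
    rw [Finset.sum_sub_distrib, Finset.sum_const, Nat.card_Ioc] at h1
    have hc : (a + L * n - a) = L * n := by omega
    rw [hc, nsmul_eq_mul] at h1
    push_cast at h1
    unfold Blk
    linarith
  have h2 := Finset.sum_le_sum key
  rw [Finset.sum_const, Nat.card_Ioc] at h2
  have hc : (c + n - c) = n := by omega
  rw [hc] at h2
  rw [← Finset.mul_sum] at h2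
  have : (Blk α c (c + n)) = ∑ j ∈ Finset.Ioc c (c + n), α j := rfl
  rw [← this] at h2
  rw [nsmul_eq_mul] at h2
  linarith

lemma pair_block {k : ℕ} {α d : ℕ → ℝ}
    (hpair : ∀ j ∈ Finset.Icc 1 k, ∀ l ∈ Finset.Icc 1 k, α j ≤ α l + d j + d l)
    {n cE cI : ℕ} (hE : cE + n ≤ k) (hI : cI + n ≤ k) :
    (n : ℝ) * Blk α cI (cI + n) ≤
      (n : ℝ) * Blk α cE (cE + n) + (n : ℝ) * Blk d cI (cI + n)
        + (n : ℝ) * Blk d cE (cE + n) := by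
  have key : ∀ j ∈ Finset.Ioc cI (cI + n),
      (n : ℝ) * α j ≤ Blk α cE (cE + n) + (n : ℝ) * d j + Blk d cE (cE + n) := by
    intro j hj
    have hjm := Finset.mem_Ioc.mp hj
    have h2 : ∀ l ∈ Finset.Ioc cE (cE + n), α j ≤ α l + d j + d l := fun l hl =>
      hpair j (Finset.mem_Icc.mpr (by omega)) l
        (Finset.mem_Icc.mpr (by have := Finset.mem_Ioc.mp hl; omega))
    have h3 := Finset.sum_le_sum h2
    rw [Finset.sum_const, Nat.card_Ioc] at h3
    have hc : (cE + n - cE) = n := by omega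
    rw [hc, nsmul_eq_mul] at h3
    have h4 : ∑ l ∈ Finset.Ioc cE (cE + n), (α l + d j + d l)
        = Blk α cE (cE + n) + (n : ℝ) * d j + Blk d cE (cE + n) := by
      rw [Finset.sum_add_distrib, Finset.sum_add_distrib, Finset.sum_const,
        Nat.card_Ioc, hc, nsmul_eq_mul]
      rfl
    rw [h4] at h3
    exact h3
  have h2 := Finset.sum_le_sum key
  rw [← Finset.mul_sum, Finset.sum_add_distrib, Finset.sum_add_distrib,
    Finset.sum_const, Finset.sum_const, Nat.card_Ioc] at h2
  have hc : (cI + n - cI) = n := by omega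
  rw [hc, nsmul_eq_mul, nsmul_eq_mul, ← Finset.mul_sum] at h2
  have e1 : (Blk α cI (cI + n)) = ∑ j ∈ Finset.Ioc cI (cI + n), α j := rfl
  have e2 : (Blk d cI (cI + n)) = ∑ j ∈ Finset.Ioc cI (cI + n), d j := rfl
  rw [← e1, ← e2] at h2
  linarith


lemma main20 (n : ℕ) (hn : 1 ≤ n) (α d : ℕ → ℝ) (f : ℝ)
    (hfeas : FRLP1Feasible (20 * n) α d f) :
    ∑ j ∈ Finset.Icc 1 (20 * n), α j ≤ 1.861 * (f + ∑ j ∈ Finset.Icc 1 (20 * n), d j) := by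
  obtain ⟨hα, hd, hf0, hmono, hpair, hsum⟩ := hfeas
  have hn0 : (0 : ℝ) < n := by exact_mod_cast Nat.lt_of_lt_of_le Nat.zero_lt_one hn
  have ha1_13 := tail_block (k := 20 * n) hsum (n := n) (c := 0) (a := 1 * n) (L := 12) (by omega) (by omega)
  rw [show 0 + n = 1 * n by ring, show 1 * n + 12 * n = 13 * n by ring] at ha1_13
  rw [← blk_split d (show 1 * n ≤ 2 * n by omega) (show 2 * n ≤ 13 * n by omega), ← blk_split d (show 2 * n ≤ 3 * n by omega) (show 3 * n ≤ 13 * n by omega), ← blk_split d (show 3 * n ≤ 4 * n by omega) (show 4 * n ≤ 13 * n by omega), ← blk_split d (show 4 * n ≤ 5 * n by omega) (show 5 * n ≤ 13 * n by omega), ← blk_split d (show 5 * n ≤ 6 * n by omega) (show 6 * n ≤ 13 * n by omega), ← blk_split d (show 6 * n ≤ 7 * n by omega) (show 7 * n ≤ 13 * n by omega), ← blk_split d (show 7 * n ≤ 8 * n by omega) (show 8 * n ≤ 13 * n by omega), ← blk_split d (show 8 * n ≤ 9 * n by omega) (show 9 * n ≤ 13 * n by omega), ← blk_split d (show 9 *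 n ≤ 10 * n by omega) (show 10 * n ≤ 13 * n by omega), ← blk_split d (show 10 * n ≤ 11 * n by omega) (show 11 * n ≤ 13 * n by omega), ← blk_split d (show 11 * n ≤ 12 * n by omega) (show 12 * n ≤ 13 * n by omega)] at ha1_13
  push_cast at ha1_13
  have ha2_14 := tail_block (k := 20 * n) hsum (n := n) (c := 1 * n) (a := 2 * n) (L := 12) (by omega) (by omega)
  rw [show 1 * n + n = 2 * n by ring, show 2 * n + 12 * n = 14 * n by ring] at ha2_14
  rw [← blk_split d (show 2 * n ≤ 3 * n by omega) (show 3 * n ≤ 14 * n by omega), ← blk_split d (show 3 * n ≤ 4 * n by omega) (show 4 * n ≤ 14 * n by omega), ← blk_split d (show 4 * n ≤ 5 * n by omega) (show 5 * n ≤ 14 * n by omega), ← blk_split d (show 5 * n ≤ 6 * n by omega) (show 6 * n ≤ 14 * n by omega), ← blk_split d (show 6 * n ≤ 7 * n by omega) (show 7 * n ≤ 14 * n by omega), ← blk_split d (show 7 * n ≤ 8 * n by omega) (show 8 * n ≤ 14 * n by omega), ← blk_split d (show 8 * n ≤ 9 * n by omega) (show 9 * n ≤ 14 * n by omega), ← blk_split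 d (show 9 * n ≤ 10 * n by omega) (show 10 * n ≤ 14 * n by omega), ← blk_split d (show 10 * n ≤ 11 * n by omega) (show 11 * n ≤ 14 * n by omega), ← blk_split d (show 11 * n ≤ 12 * n by omega) (show 12 * n ≤ 14 * n by omega), ← blk_split d (show 12 * n ≤ 13 * n by omega) (show 13 * n ≤ 14 * n by omega)] at ha2_14
  push_cast at ha2_14
  have ha3_14 := tail_block (k := 20 * n) hsum (n := n) (c := 2 * n) (a := 3 * n) (L := 11) (by omega) (by omega)
  rw [show 2 * n + n = 3 * n by ring, show 3 * n + 11 * n = 14 * n by ring] at ha3_14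
  rw [← blk_split d (show 3 * n ≤ 4 * n by omega) (show 4 * n ≤ 14 * n by omega), ← blk_split d (show 4 * n ≤ 5 * n by omega) (show 5 * n ≤ 14 * n by omega), ← blk_split d (show 5 * n ≤ 6 * n by omega) (show 6 * n ≤ 14 * n by omega), ← blk_split d (show 6 * n ≤ 7 * n by omega) (show 7 * n ≤ 14 * n by omega), ← blk_split d (show 7 * n ≤ 8 * n by omega) (show 8 * n ≤ 14 * n by omega), ← blk_split d (show 8 * n ≤ 9 * n by omega) (show 9 * n ≤ 14 * n by omega), ← blk_split d (show 9 * n ≤ 10 * n by omega) (show 10 * n ≤ 14 * n by omega), ← blk_split d (show 10 * n ≤ 11 * n by omega) (show 11 * n ≤ 14 * n by omega), ← blk_split d (show 11 * n ≤ 12 * n by omega) (show 12 * n ≤ 14 * n by omega), ← blk_split d (show 12 * n ≤ 13 * n by omega) (show 13 * n ≤ 14 * n by omega)] at ha3_14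
  push_cast at ha3_14
  have ha4_14 := tail_block (k := 20 * n) hsum (n := n) (c := 3 * n) (a := 4 * n) (L := 10) (by omega) (by omega)
  rw [show 3 * n + n = 4 * n by ring, show 4 * n + 10 * n = 14 * n by ring] at ha4_14
  rw [← blk_split d (show 4 * n ≤ 5 * n by omega) (show 5 * n ≤ 14 * n by omega), ← blk_split d (show 5 * n ≤ 6 * n by omega) (show 6 * n ≤ 14 * n by omega), ← blk_split d (show 6 * n ≤ 7 * n by omega) (show 7 * n ≤ 14 * n by omega), ← blk_split d (show 7 * n ≤ 8 * n by omega) (show 8 * n ≤ 14 * n by omega), ← blk_split d (show 8 * n ≤ 9 * n by omega) (show 9 * n ≤ 14 * n by omega), ← blk_split d (show 9 * n ≤ 10 * n by omega) (show 10 * n ≤ 14 * n by omega), ← blk_split d (show 10 * n ≤ 11 * n by omega) (show 11 * n ≤ 14 * n by omega), ← blk_split d (show 11 * n ≤ 12 * n by omega) (show 12 * n ≤ 14 * n by omega), ← blk_split d (show 12 * n ≤ 13 * n by omega) (show 13 * n ≤ 14 * n by omega)] at ha4_14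
  push_cast at ha4_14
  have ha5_14 := tail_block (k := 20 * n) hsum (n := n) (c := 4 * n) (a := 5 * n) (L := 9) (by omega) (by omega)
  rw [show 4 * n + n = 5 * n by ring, show 5 * n + 9 * n = 14 * n by ring] at ha5_14
  rw [← blk_split d (show 5 * n ≤ 6 * n by omega) (show 6 * n ≤ 14 * n by omega), ← blk_split d (show 6 * n ≤ 7 * n by omega) (show 7 * n ≤ 14 * n by omega), ← blk_split d (show 7 * n ≤ 8 * n by omega) (show 8 * n ≤ 14 * n by omega), ← blk_split d (show 8 * n ≤ 9 * n by omega) (show 9 * n ≤ 14 * n by omega), ← blk_split d (show 9 * n ≤ 10 * n by omega) (show 10 * n ≤ 14 * n by omega), ← blk_split d (show 10 * n ≤ 11 * n by omega) (show 11 * n ≤ 14 * n by omega), ← blk_split d (show 11 * n ≤ 12 * n by omega) (show 12 * n ≤ 14 * n by omega), ← blk_split d (show 12 * n ≤ 13 * n by omega) (show 13 * n ≤ 14 * n by omega)] at ha5_14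
  push_cast at ha5_14
  have ha5_20 := tail_block (k := 20 * n) hsum (n := n) (c := 4 * n) (a := 5 * n) (L := 15) (by omega) (by omega)
  rw [show 4 * n + n = 5 * n by ring, show 5 * n + 15 * n = 20 * n by ring] at ha5_20
  rw [← blk_split d (show 5 * n ≤ 6 * n by omega) (show 6 * n ≤ 20 * n by omega), ← blk_split d (show 6 * n ≤ 7 * n by omega) (show 7 * n ≤ 20 * n by omega), ← blk_split d (show 7 * n ≤ 8 * n by omega) (show 8 * n ≤ 20 * n by omega), ← blk_split d (show 8 * n ≤ 9 * n by omega) (show 9 * n ≤ 20 * n by omega), ← blk_split d (show 9 * n ≤ 10 * n by omega) (show 10 * n ≤ 20 * n by omega), ← blk_split d (show 10 * n ≤ 11 * n by omega) (show 11 * n ≤ 20 * n by omega), ← blk_split d (show 11 * n ≤ 12 * n by omega) (show 12 * n ≤ 20 * n by omega), ← blk_split d (show 12 * n ≤ 13 * n by omega) (show 13 * n ≤ 20 * n by omega), ← blk_split d (show 13 * n ≤ 14 * n by omega) (show 14 * n ≤ 20 * n by omega), ← blk_split d (show 14 * n ≤ 15 * n by omega) (show 15 * n ≤ 20 * n by omega),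 ← blk_split d (show 15 * n ≤ 16 * n by omega) (show 16 * n ≤ 20 * n by omega), ← blk_split d (show 16 * n ≤ 17 * n by omega) (show 17 * n ≤ 20 * n by omega), ← blk_split d (show 17 * n ≤ 18 * n by omega) (show 18 * n ≤ 20 * n by omega), ← blk_split d (show 18 * n ≤ 19 * n by omega) (show 19 * n ≤ 20 * n by omega)] at ha5_20
  push_cast at ha5_20
  have ha6_20 := tail_block (k := 20 * n) hsum (n := n) (c := 5 * n) (a := 6 * n) (L := 14) (by omega) (by omega)
  rw [show 5 * n + n = 6 * n by ring, show 6 * n + 14 * n = 20 * n by ring] at ha6_20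
  rw [← blk_split d (show 6 * n ≤ 7 * n by omega) (show 7 * n ≤ 20 * n by omega), ← blk_split d (show 7 * n ≤ 8 * n by omega) (show 8 * n ≤ 20 * n by omega), ← blk_split d (show 8 * n ≤ 9 * n by omega) (show 9 * n ≤ 20 * n by omega), ← blk_split d (show 9 * n ≤ 10 * n by omega) (show 10 * n ≤ 20 * n by omega), ← blk_split d (show 10 * n ≤ 11 * n by omega) (show 11 * n ≤ 20 * n by omega), ← blk_split d (show 11 * n ≤ 12 * n by omega) (show 12 * n ≤ 20 * n by omega), ← blk_split d (show 12 * n ≤ 13 * n by omega) (show 13 * n ≤ 20 * n by omega), ← blk_split d (show 13 * n ≤ 14 * n by omega) (show 14 * n ≤ 20 * n by omega), ← blk_split d (show 14 * n ≤ 15 * n by omega) (show 15 * n ≤ 20 * n by omega), ← blk_split d (show 15 * n ≤ 16 * n by omega) (show 16 * n ≤ 20 * n by omega), ← blk_split d (show 16 * n ≤ 17 * n by omega) (show 17 * n ≤ 20 * n by omega), ← blk_split d (show 17 * n ≤ 18 * n by omega) (show 18 * n ≤ 20 * n by omega), ← blk_split d (show 18 * n ≤ 19 * n by omega) (show 19 *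 n ≤ 20 * n by omega)] at ha6_20
  push_cast at ha6_20
  have ha7_20 := tail_block (k := 20 * n) hsum (n := n) (c := 6 * n) (a := 7 * n) (L := 13) (by omega) (by omega)
  rw [show 6 * n + n = 7 * n by ring, show 7 * n + 13 * n = 20 * n by ring] at ha7_20
  rw [← blk_split d (show 7 * n ≤ 8 * n by omega) (show 8 * n ≤ 20 * n by omega), ← blk_split d (show 8 * n ≤ 9 * n by omega) (show 9 * n ≤ 20 * n by omega), ← blk_split d (show 9 * n ≤ 10 * n by omega) (show 10 * n ≤ 20 * n by omega), ← blk_split d (show 10 * n ≤ 11 * n by omega) (show 11 * n ≤ 20 * n by omega), ← blk_split d (show 11 * n ≤ 12 * n by omega) (show 12 * n ≤ 20 * n by omega), ← blk_split d (show 12 * n ≤ 13 * n by omega) (show 13 * n ≤ 20 * n by omega), ← blk_split d (show 13 * n ≤ 14 * n by omega) (show 14 * n ≤ 20 * n by omega), ← blk_split d (show 14 * n ≤ 15 * n by omega) (show 15 * n ≤ 20 * n by omega), ← blk_split d (show 15 * n ≤ 16 * n by omega) (show 16 * n ≤ 20 * n by omega), ← blk_split d (show 16 * n ≤ 17 * n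 by omega) (show 17 * n ≤ 20 * n by omega), ← blk_split d (show 17 * n ≤ 18 * n by omega) (show 18 * n ≤ 20 * n by omega), ← blk_split d (show 18 * n ≤ 19 * n by omega) (show 19 * n ≤ 20 * n by omega)] at ha7_20
  push_cast at ha7_20
  have ha8_20 := tail_block (k := 20 * n) hsum (n := n) (c := 7 * n) (a := 8 * n) (L := 12) (by omega) (by omega)
  rw [show 7 * n + n = 8 * n by ring, show 8 * n + 12 * n = 20 * n by ring] at ha8_20
  rw [← blk_split d (show 8 * n ≤ 9 * n by omega) (show 9 * n ≤ 20 * n by omega), ← blk_split d (show 9 * n ≤ 10 * n by omega) (show 10 * n ≤ 20 * n by omega), ← blk_split d (show 10 * n ≤ 11 * n by omega) (show 11 * n ≤ 20 * n by omega), ← blk_split d (show 11 * n ≤ 12 * n by omega) (show 12 * n ≤ 20 * n by omega), ← blk_split d (show 12 * n ≤ 13 * n by omega) (show 13 * n ≤ 20 * n by omega), ← blk_split d (show 13 * n ≤ 14 * n by omega) (show 14 * n ≤ 20 * n by omega), ← blk_split d (show 14 * n ≤ 15 * n by omega) (show 15 * n ≤ 20 * n by omega), ← blk_split d (show 15 *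 n ≤ 16 * n by omega) (show 16 * n ≤ 20 * n by omega), ← blk_split d (show 16 * n ≤ 17 * n by omega) (show 17 * n ≤ 20 * n by omega), ← blk_split d (show 17 * n ≤ 18 * n by omega) (show 18 * n ≤ 20 * n by omega), ← blk_split d (show 18 * n ≤ 19 * n by omega) (show 19 * n ≤ 20 * n by omega)] at ha8_20
  push_cast at ha8_20
  have ha9_20 := tail_block (k := 20 * n) hsum (n := n) (c := 8 * n) (a := 9 * n) (L := 11) (by omega) (by omega)
  rw [show 8 * n + n = 9 * n by ring, show 9 * n + 11 * n = 20 * n by ring] at ha9_20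
  rw [← blk_split d (show 9 * n ≤ 10 * n by omega) (show 10 * n ≤ 20 * n by omega), ← blk_split d (show 10 * n ≤ 11 * n by omega) (show 11 * n ≤ 20 * n by omega), ← blk_split d (show 11 * n ≤ 12 * n by omega) (show 12 * n ≤ 20 * n by omega), ← blk_split d (show 12 * n ≤ 13 * n by omega) (show 13 * n ≤ 20 * n by omega), ← blk_split d (show 13 * n ≤ 14 * n by omega) (show 14 * n ≤ 20 * n by omega), ← blk_split d (show 14 * n ≤ 15 * n by omega) (show 15 * n ≤ 20 * n by omega), ← blk_split d (show 15 * n ≤ 16 * n by omega) (show 16 * n ≤ 20 * n by omega), ← blk_split d (show 16 * n ≤ 17 * n by omega) (show 17 * n ≤ 20 * n by omega), ← blk_split d (show 17 * n ≤ 18 * n by omega) (show 18 * n ≤ 20 * n by omega), ← blk_split d (show 18 * n ≤ 19 * n by omega) (show 19 * n ≤ 20 * n by omega)] at ha9_20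
  push_cast at ha9_20
  have ha10_20 := tail_block (k := 20 * n) hsum (n := n) (c := 9 * n) (a := 10 * n) (L := 10) (by omega) (by omega)
  rw [show 9 * n + n = 10 * n by ring, show 10 * n + 10 * n = 20 * n by ring] at ha10_20
  rw [← blk_split d (show 10 * n ≤ 11 * n by omega) (show 11 * n ≤ 20 * n by omega), ← blk_split d (show 11 * n ≤ 12 * n by omega) (show 12 * n ≤ 20 * n by omega), ← blk_split d (show 12 * n ≤ 13 * n by omega) (show 13 * n ≤ 20 * n by omega), ← blk_split d (show 13 * n ≤ 14 * n by omega) (show 14 * n ≤ 20 * n by omega), ← blk_split d (show 14 * n ≤ 15 * n by omega) (show 15 * n ≤ 20 * n by omega), ← blk_split d (show 15 * n ≤ 16 * n by omega) (show 16 * n ≤ 20 * n by omega), ← blk_split d (show 16 * n ≤ 17 * n by omega) (show 17 * n ≤ 20 * n by omega), ← blk_split d (show 17 * n ≤ 18 * n by omega) (show 18 * n ≤ 20 * n by omega), ← blk_split d (show 18 * n ≤ 19 * n by omega) (show 19 * n ≤ 20 * n by omega)] at ha10_20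
  push_cast at ha10_20
  have ha11_20 := tail_block (k := 20 * n) hsum (n := n) (c := 10 * n) (a := 11 * n) (L := 9) (by omega) (by omega)
  rw [show 10 * n + n = 11 * n by ring, show 11 * n + 9 * n = 20 * n by ring] at ha11_20
  rw [← blk_split d (show 11 * n ≤ 12 * n by omega) (show 12 * n ≤ 20 * n by omega), ← blk_split d (show 12 * n ≤ 13 * n by omega) (show 13 * n ≤ 20 * n by omega), ← blk_split d (show 13 * n ≤ 14 * n by omega) (show 14 * n ≤ 20 * n by omega), ← blk_split d (show 14 * n ≤ 15 * n by omega) (show 15 * n ≤ 20 * n by omega), ← blk_split d (show 15 * n ≤ 16 * n by omega) (show 16 * n ≤ 20 * n by omega), ← blk_split d (show 16 * n ≤ 17 * n by omega) (show 17 * n ≤ 20 * n by omega), ← blk_split d (show 17 * n ≤ 18 * n by omega) (show 18 * n ≤ 20 * n by omega), ← blk_split d (show 18 * n ≤ 19 * n by omega) (show 19 * n ≤ 20 * n by omega)] at ha11_20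
  push_cast at ha11_20
  have ha12_20 := tail_block (k := 20 * n) hsum (n := n) (c := 11 * n) (a := 12 * n) (L := 8) (by omega) (by omega)
  rw [show 11 * n + n = 12 * n by ring, show 12 * n + 8 * n = 20 * n by ring] at ha12_20
  rw [← blk_split d (show 12 * n ≤ 13 * n by omega) (show 13 * n ≤ 20 * n by omega), ← blk_split d (show 13 * n ≤ 14 * n by omega) (show 14 * n ≤ 20 * n by omega), ← blk_split d (show 14 * n ≤ 15 * n by omega) (show 15 * n ≤ 20 * n by omega), ← blk_split d (show 15 * n ≤ 16 * n by omega) (show 16 * n ≤ 20 * n by omega), ← blk_split d (show 16 * n ≤ 17 * n by omega) (show 17 * n ≤ 20 * n by omega), ← blk_split d (show 17 * n ≤ 18 * n by omega) (show 18 * n ≤ 20 * n by omega), ← blk_split d (show 18 * n ≤ 19 * n by omega) (show 19 * n ≤ 20 * n by omega)] at ha12_20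
  push_cast at ha12_20
  have ha13_20 := tail_block (k := 20 * n) hsum (n := n) (c := 12 * n) (a := 13 * n) (L := 7) (by omega) (by omega)
  rw [show 12 * n + n = 13 * n by ring, show 13 * n + 7 * n = 20 * n by ring] at ha13_20
  rw [← blk_split d (show 13 * n ≤ 14 * n by omega) (show 14 * n ≤ 20 * n by omega), ← blk_split d (show 14 * n ≤ 15 * n by omega) (show 15 * n ≤ 20 * n by omega), ← blk_split d (show 15 * n ≤ 16 * n by omega) (show 16 * n ≤ 20 * n by omega), ← blk_split d (show 16 * n ≤ 17 * n by omega) (show 17 * n ≤ 20 * n by omega), ← blk_split d (show 17 * n ≤ 18 * n by omega) (show 18 * n ≤ 20 * n by omega), ← blk_split d (show 18 * n ≤ 19 * n by omega) (show 19 * n ≤ 20 * n by omega)] at ha13_20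
  push_cast at ha13_20
  have ha14_20 := tail_block (k := 20 * n) hsum (n := n) (c := 13 * n) (a := 14 * n) (L := 6) (by omega) (by omega)
  rw [show 13 * n + n = 14 * n by ring, show 14 * n + 6 * n = 20 * n by ring] at ha14_20
  rw [← blk_split d (show 14 * n ≤ 15 * n by omega) (show 15 * n ≤ 20 * n by omega), ← blk_split d (show 15 * n ≤ 16 * n by omega) (show 16 * n ≤ 20 * n by omega), ← blk_split d (show 16 * n ≤ 17 * n by omega) (show 17 * n ≤ 20 * n by omega), ← blk_split d (show 17 * n ≤ 18 * n by omega) (show 18 * n ≤ 20 * n by omega), ← blk_split d (show 18 * n ≤ 19 * n by omega) (show 19 * n ≤ 20 * n by omega)] at ha14_20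
  push_cast at ha14_20
  have hb8_6 := pair_block (k := 20 * n) hpair (n := n) (cE := 5 * n) (cI := 7 * n) (by omega) (by omega)
  rw [show 5 * n + n = 6 * n by ring, show 7 * n + n = 8 * n by ring] at hb8_6
  have hb9_3 := pair_block (k := 20 * n) hpair (n := n) (cE := 2 * n) (cI := 8 * n) (by omega) (by omega)
  rw [show 2 * n + n = 3 * n by ring, show 8 * n + n = 9 * n by ring] at hb9_3
  have hb9_6 := pair_block (k := 20 * n) hpair (n := n) (cE := 5 * n) (cI := 8 * n) (by omega) (by omega)
  rw [show 5 * n + n = 6 * n by ring, show 8 * n + n = 9 * n by ring] at hb9_6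
  have hb10_2 := pair_block (k := 20 * n) hpair (n := n) (cE := 1 * n) (cI := 9 * n) (by omega) (by omega)
  rw [show 1 * n + n = 2 * n by ring, show 9 * n + n = 10 * n by ring] at hb10_2
  have hb10_3 := pair_block (k := 20 * n) hpair (n := n) (cE := 2 * n) (cI := 9 * n) (by omega) (by omega)
  rw [show 2 * n + n = 3 * n by ring, show 9 * n + n = 10 * n by ring] at hb10_3
  have hb11_1 := pair_block (k := 20 * n) hpair (n := n) (cE := 0) (cI := 10 * n) (by omega) (by omega)
  rw [show 0 + n = 1 * n by ring, show 10 * n + n = 11 * n by ring] at hb11_1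
  have hb11_8 := pair_block (k := 20 * n) hpair (n := n) (cE := 7 * n) (cI := 10 * n) (by omega) (by omega)
  rw [show 7 * n + n = 8 * n by ring, show 10 * n + n = 11 * n by ring] at hb11_8
  have hb12_4 := pair_block (k := 20 * n) hpair (n := n) (cE := 3 * n) (cI := 11 * n) (by omega) (by omega)
  rw [show 3 * n + n = 4 * n by ring, show 11 * n + n = 12 * n by ring] at hb12_4
  have hb13_7 := pair_block (k := 20 * n) hpair (n := n) (cE := 6 * n) (cI := 12 * n) (by omega) (by omega)
  rw [show 6 * n + n = 7 * n by ring, show 12 * n + n = 13 * n by ring] at hb13_7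
  have hb14_2 := pair_block (k := 20 * n) hpair (n := n) (cE := 1 * n) (cI := 13 * n) (by omega) (by omega)
  rw [show 1 * n + n = 2 * n by ring, show 13 * n + n = 14 * n by ring] at hb14_2
  have hb15_3 := pair_block (k := 20 * n) hpair (n := n) (cE := 2 * n) (cI := 14 * n) (by omega) (by omega)
  rw [show 2 * n + n = 3 * n by ring, show 14 * n + n = 15 * n by ring] at hb15_3
  have hb15_5 := pair_block (k := 20 * n) hpair (n := n) (cE := 4 * n) (cI := 14 * n) (by omega) (by omega)
  rw [show 4 * n + n = 5 * n by ring, show 14 * n + n = 15 * n by ring] at hb15_5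
  have hb16_3 := pair_block (k := 20 * n) hpair (n := n) (cE := 2 * n) (cI := 15 * n) (by omega) (by omega)
  rw [show 2 * n + n = 3 * n by ring, show 15 * n + n = 16 * n by ring] at hb16_3
  have hb17_2 := pair_block (k := 20 * n) hpair (n := n) (cE := 1 * n) (cI := 16 * n) (by omega) (by omega)
  rw [show 1 * n + n = 2 * n by ring, show 16 * n + n = 17 * n by ring] at hb17_2
  have hb18_1 := pair_block (k := 20 * n) hpair (n := n) (cE := 0) (cI := 17 * n) (by omega) (by omega)
  rw [show 0 + n = 1 * n by ring, show 17 * n + n = 18 * n by ring] at hb18_1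
  have hb18_7 := pair_block (k := 20 * n) hpair (n := n) (cE := 6 * n) (cI := 17 * n) (by omega) (by omega)
  rw [show 6 * n + n = 7 * n by ring, show 17 * n + n = 18 * n by ring] at hb18_7
  have hb19_4 := pair_block (k := 20 * n) hpair (n := n) (cE := 3 * n) (cI := 18 * n) (by omega) (by omega)
  rw [show 3 * n + n = 4 * n by ring, show 18 * n + n = 19 * n by ring] at hb19_4
  have hb19_5 := pair_block (k := 20 * n) hpair (n := n) (cE := 4 * n) (cI := 18 * n) (by omega) (by omega)
  rw [show 4 * n + n = 5 * n by ring, show 18 * n + n = 19 * n by ring] at hb19_5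
  have hb20_1 := pair_block (k := 20 * n) hpair (n := n) (cE := 0) (cI := 19 * n) (by omega) (by omega)
  rw [show 0 + n = 1 * n by ring, show 19 * n + n = 20 * n by ring] at hb20_1
  have hnn_a1 : 0 ≤ (n : ℝ) * Blk α (0) (1 * n) := mul_nonneg (Nat.cast_nonneg n) (blk_nonneg (k := 20 * n) hα (by omega))
  have hnn_d1 : 0 ≤ (n : ℝ) * Blk d (0) (1 * n) := mul_nonneg (Nat.cast_nonneg n) (blk_nonneg (k := 20 * n) hd (by omega))
  have hnn_a2 : 0 ≤ (n : ℝ) * Blk α (1 * n) (2 * n) := mul_nonneg (Nat.cast_nonneg n) (blk_nonneg (k := 20 * n) hα (by omega))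
  have hnn_d2 : 0 ≤ (n : ℝ) * Blk d (1 * n) (2 * n) := mul_nonneg (Nat.cast_nonneg n) (blk_nonneg (k := 20 * n) hd (by omega))
  have hnn_a3 : 0 ≤ (n : ℝ) * Blk α (2 * n) (3 * n) := mul_nonneg (Nat.cast_nonneg n) (blk_nonneg (k := 20 * n) hα (by omega))
  have hnn_d3 : 0 ≤ (n : ℝ) * Blk d (2 * n) (3 * n) := mul_nonneg (Nat.cast_nonneg n) (blk_nonneg (k := 20 * n) hd (by omega))
  have hnn_a4 : 0 ≤ (n : ℝ) * Blk α (3 * n) (4 * n) := mul_nonneg (Nat.cast_nonneg n) (blk_nonneg (k := 20 * n) hα (by omega))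
  have hnn_d4 : 0 ≤ (n : ℝ) * Blk d (3 * n) (4 * n) := mul_nonneg (Nat.cast_nonneg n) (blk_nonneg (k := 20 * n) hd (by omega))
  have hnn_a5 : 0 ≤ (n : ℝ) * Blk α (4 * n) (5 * n) := mul_nonneg (Nat.cast_nonneg n) (blk_nonneg (k := 20 * n) hα (by omega))
  have hnn_d5 : 0 ≤ (n : ℝ) * Blk d (4 * n) (5 * n) := mul_nonneg (Nat.cast_nonneg n) (blk_nonneg (k := 20 * n) hd (by omega))
  have hnn_a6 : 0 ≤ (n : ℝ) * Blk α (5 * n) (6 * n) := mul_nonneg (Nat.cast_nonneg n) (blk_nonneg (k := 20 * n) hα (by omega))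
  have hnn_d6 : 0 ≤ (n : ℝ) * Blk d (5 * n) (6 * n) := mul_nonneg (Nat.cast_nonneg n) (blk_nonneg (k := 20 * n) hd (by omega))
  have hnn_a7 : 0 ≤ (n : ℝ) * Blk α (6 * n) (7 * n) := mul_nonneg (Nat.cast_nonneg n) (blk_nonneg (k := 20 * n) hα (by omega))
  have hnn_d7 : 0 ≤ (n : ℝ) * Blk d (6 * n) (7 * n) := mul_nonneg (Nat.cast_nonneg n) (blk_nonneg (k := 20 * n) hd (by omega))
  have hnn_a8 : 0 ≤ (n : ℝ) * Blk α (7 * n) (8 * n) := mul_nonneg (Nat.cast_nonneg n) (blk_nonneg (k := 20 * n) hα (by omega))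
  have hnn_d8 : 0 ≤ (n : ℝ) * Blk d (7 * n) (8 * n) := mul_nonneg (Nat.cast_nonneg n) (blk_nonneg (k := 20 * n) hd (by omega))
  have hnn_a9 : 0 ≤ (n : ℝ) * Blk α (8 * n) (9 * n) := mul_nonneg (Nat.cast_nonneg n) (blk_nonneg (k := 20 * n) hα (by omega))
  have hnn_d9 : 0 ≤ (n : ℝ) * Blk d (8 * n) (9 * n) := mul_nonneg (Nat.cast_nonneg n) (blk_nonneg (k := 20 * n) hd (by omega))
  have hnn_a10 : 0 ≤ (n : ℝ) * Blk α (9 * n) (10 * n) := mul_nonneg (Nat.cast_nonneg n) (blk_nonneg (k := 20 * n) hα (by omega))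
  have hnn_d10 : 0 ≤ (n : ℝ) * Blk d (9 * n) (10 * n) := mul_nonneg (Nat.cast_nonneg n) (blk_nonneg (k := 20 * n) hd (by omega))
  have hnn_a11 : 0 ≤ (n : ℝ) * Blk α (10 * n) (11 * n) := mul_nonneg (Nat.cast_nonneg n) (blk_nonneg (k := 20 * n) hα (by omega))
  have hnn_d11 : 0 ≤ (n : ℝ) * Blk d (10 * n) (11 * n) := mul_nonneg (Nat.cast_nonneg n) (blk_nonneg (k := 20 * n) hd (by omega))
  have hnn_a12 : 0 ≤ (n : ℝ) * Blk α (11 * n) (12 * n) := mul_nonneg (Nat.cast_nonneg n) (blk_nonneg (k := 20 * n) hα (by omega))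
  have hnn_d12 : 0 ≤ (n : ℝ) * Blk d (11 * n) (12 * n) := mul_nonneg (Nat.cast_nonneg n) (blk_nonneg (k := 20 * n) hd (by omega))
  have hnn_a13 : 0 ≤ (n : ℝ) * Blk α (12 * n) (13 * n) := mul_nonneg (Nat.cast_nonneg n) (blk_nonneg (k := 20 * n) hα (by omega))
  have hnn_d13 : 0 ≤ (n : ℝ) * Blk d (12 * n) (13 * n) := mul_nonneg (Nat.cast_nonneg n) (blk_nonneg (k := 20 * n) hd (by omega))
  have hnn_a14 : 0 ≤ (n : ℝ) * Blk α (13 * n) (14 * n) := mul_nonneg (Nat.cast_nonneg n) (blk_nonneg (k := 20 * n) hα (by omega))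
  have hnn_d14 : 0 ≤ (n : ℝ) * Blk d (13 * n) (14 * n) := mul_nonneg (Nat.cast_nonneg n) (blk_nonneg (k := 20 * n) hd (by omega))
  have hnn_a15 : 0 ≤ (n : ℝ) * Blk α (14 * n) (15 * n) := mul_nonneg (Nat.cast_nonneg n) (blk_nonneg (k := 20 * n) hα (by omega))
  have hnn_d15 : 0 ≤ (n : ℝ) * Blk d (14 * n) (15 * n) := mul_nonneg (Nat.cast_nonneg n) (blk_nonneg (k := 20 * n) hd (by omega))
  have hnn_a16 : 0 ≤ (n : ℝ) * Blk α (15 * n) (16 * n) := mul_nonneg (Nat.cast_nonneg n) (blk_nonneg (k := 20 * n) hα (by omega))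
  have hnn_d16 : 0 ≤ (n : ℝ) * Blk d (15 * n) (16 * n) := mul_nonneg (Nat.cast_nonneg n) (blk_nonneg (k := 20 * n) hd (by omega))
  have hnn_a17 : 0 ≤ (n : ℝ) * Blk α (16 * n) (17 * n) := mul_nonneg (Nat.cast_nonneg n) (blk_nonneg (k := 20 * n) hα (by omega))
  have hnn_d17 : 0 ≤ (n : ℝ) * Blk d (16 * n) (17 * n) := mul_nonneg (Nat.cast_nonneg n) (blk_nonneg (k := 20 * n) hd (by omega))
  have hnn_a18 : 0 ≤ (n : ℝ) * Blk α (17 * n) (18 * n) := mul_nonneg (Nat.cast_nonneg n) (blk_nonneg (k := 20 * n) hα (by omega))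
  have hnn_d18 : 0 ≤ (n : ℝ) * Blk d (17 * n) (18 * n) := mul_nonneg (Nat.cast_nonneg n) (blk_nonneg (k := 20 * n) hd (by omega))
  have hnn_a19 : 0 ≤ (n : ℝ) * Blk α (18 * n) (19 * n) := mul_nonneg (Nat.cast_nonneg n) (blk_nonneg (k := 20 * n) hα (by omega))
  have hnn_d19 : 0 ≤ (n : ℝ) * Blk d (18 * n) (19 * n) := mul_nonneg (Nat.cast_nonneg n) (blk_nonneg (k := 20 * n) hd (by omega))
  have hnn_a20 : 0 ≤ (n : ℝ) * Blk α (19 * n) (20 * n) := mul_nonneg (Nat.cast_nonneg n) (blk_nonneg (k := 20 * n) hα (by omega))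
  have hnn_d20 : 0 ≤ (n : ℝ) * Blk d (19 * n) (20 * n) := mul_nonneg (Nat.cast_nonneg n) (blk_nonneg (k := 20 * n) hd (by omega))
  rw [show Finset.Icc 1 (20 * n) = Finset.Ioc 0 (20 * n) from Finset.Icc_add_one_left_eq_Ioc 0 (20 * n)]
  show Blk α 0 (20 * n) ≤ 1.861 * (f + Blk d 0 (20 * n))
  have gA : Blk α 0 (20 * n) = Blk α (0) (1 * n) + (Blk α (1 * n) (2 * n) + (Blk α (2 * n) (3 * n) + (Blk α (3 * n) (4 * n) + (Blk α (4 * n) (5 * n) + (Blk α (5 * n) (6 * n) + (Blk α (6 * n) (7 * n) + (Blk α (7 * n) (8 * n) + (Blk α (8 * n) (9 * n) + (Blk α (9 * n) (10 * n) + (Blk α (10 * n) (11 * n) + (Blk α (11 * n) (12 * n) + (Blk α (12 * n) (13 * n) + (Blk α (13 * n) (14 * n) + (Blk α (14 * n) (15 * n) + (Blk α (15 * n) (16 * n) + (Blk α (16 * n) (17 * n) + (Blk α (17 * n) (18 * n) + (Blk α (18 * n) (19 * n) + (Blk α (19 * n) (20 * n)))))))))))))))))))) := by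
    rw [← blk_split α (show 0 ≤ 1 * n by omega) (show 1 * n ≤ 20 * n by omega), ← blk_split α (show 1 * n ≤ 2 * n by omega) (show 2 * n ≤ 20 * n by omega), ← blk_split α (show 2 * n ≤ 3 * n by omega) (show 3 * n ≤ 20 * n by omega), ← blk_split α (show 3 * n ≤ 4 * n by omega) (show 4 * n ≤ 20 * n by omega), ← blk_split α (show 4 * n ≤ 5 * n by omega) (show 5 * n ≤ 20 * n by omega), ← blk_split α (show 5 * n ≤ 6 * n by omega) (show 6 * n ≤ 20 * n by omega), ← blk_split α (show 6 * n ≤ 7 * n by omega) (show 7 * n ≤ 20 * n by omega), ← blk_split α (show 7 * n ≤ 8 * n by omega) (show 8 * n ≤ 20 * n by omega), ← blk_split α (show 8 * n ≤ 9 * n by omega) (show 9 * n ≤ 20 * n by omega), ← blk_split α (show 9 * n ≤ 10 * n by omega) (show 10 * n ≤ 20 * n by omega), ← blk_split α (show 10 * n ≤ 11 * n by omega) (show 11 * n ≤ 20 * n by omega), ← blk_split α (show 11 * n ≤ 12 * n by omega) (show 12 * n ≤ 20 * n by omega), ← blk_split α (show 12 * n ≤ 13 * n by omega) (show 13 * n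 ≤ 20 * n by omega), ← blk_split α (show 13 * n ≤ 14 * n by omega) (show 14 * n ≤ 20 * n by omega), ← blk_split α (show 14 * n ≤ 15 * n by omega) (show 15 * n ≤ 20 * n by omega), ← blk_split α (show 15 * n ≤ 16 * n by omega) (show 16 * n ≤ 20 * n by omega), ← blk_split α (show 16 * n ≤ 17 * n by omega) (show 17 * n ≤ 20 * n by omega), ← blk_split α (show 17 * n ≤ 18 * n by omega) (show 18 * n ≤ 20 * n by omega), ← blk_split α (show 18 * n ≤ 19 * n by omega) (show 19 * n ≤ 20 * n by omega)]
  have gD : Blk d 0 (20 * n) = Blk d (0) (1 * n) + (Blk d (1 * n) (2 * n) + (Blk d (2 * n) (3 * n) + (Blk d (3 * n) (4 * n) + (Blk d (4 * n) (5 * n) + (Blk d (5 * n) (6 * n) + (Blk d (6 * n) (7 * n) + (Blk d (7 * n) (8 * n) + (Blk d (8 * n) (9 * n) + (Blk d (9 * n) (10 * n) + (Blk d (10 * n) (11 * n) + (Blk d (11 * n) (12 * n) + (Blk d (12 * n) (13 * n) + (Blk d (13 * n) (14 * n) + (Blk d (14 * n) (15 * n) + (Blk d (15 * n) (16 * n)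 + (Blk d (16 * n) (17 * n) + (Blk d (17 * n) (18 * n) + (Blk d (18 * n) (19 * n) + (Blk d (19 * n) (20 * n)))))))))))))))))))) := by
    rw [← blk_split d (show 0 ≤ 1 * n by omega) (show 1 * n ≤ 20 * n by omega), ← blk_split d (show 1 * n ≤ 2 * n by omega) (show 2 * n ≤ 20 * n by omega), ← blk_split d (show 2 * n ≤ 3 * n by omega) (show 3 * n ≤ 20 * n by omega), ← blk_split d (show 3 * n ≤ 4 * n by omega) (show 4 * n ≤ 20 * n by omega), ← blk_split d (show 4 * n ≤ 5 * n by omega) (show 5 * n ≤ 20 * n by omega), ← blk_split d (show 5 * n ≤ 6 * n by omega) (show 6 * n ≤ 20 * n by omega), ← blk_split d (show 6 * n ≤ 7 * n by omega) (show 7 * n ≤ 20 * n by omega), ← blk_split d (show 7 * n ≤ 8 * n by omega) (show 8 * n ≤ 20 * n by omega), ← blk_split d (show 8 * n ≤ 9 * n by omega) (show 9 * n ≤ 20 * n by omega), ← blk_split d (show 9 * n ≤ 10 * n by omega) (show 10 * n ≤ 20 * n by omega), ← blk_split d (show 10 * n ≤ 11 * n by omega) (show 11 * n ≤ 20 * n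 by omega), ← blk_split d (show 11 * n ≤ 12 * n by omega) (show 12 * n ≤ 20 * n by omega), ← blk_split d (show 12 * n ≤ 13 * n by omega) (show 13 * n ≤ 20 * n by omega), ← blk_split d (show 13 * n ≤ 14 * n by omega) (show 14 * n ≤ 20 * n by omega), ← blk_split d (show 14 * n ≤ 15 * n by omega) (show 15 * n ≤ 20 * n by omega), ← blk_split d (show 15 * n ≤ 16 * n by omega) (show 16 * n ≤ 20 * n by omega), ← blk_split d (show 16 * n ≤ 17 * n by omega) (show 17 * n ≤ 20 * n by omega), ← blk_split d (show 17 * n ≤ 18 * n by omega) (show 18 * n ≤ 20 * n by omega), ← blk_split d (show 18 * n ≤ 19 * n by omega) (show 19 * n ≤ 20 * n by omega)]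
  have hfin : (n : ℝ) * Blk α 0 (20 * n) ≤ (n : ℝ) * (1.861 * (f + Blk d 0 (20 * n))) := by
    rw [gA, gD]
    linarith [ha1_13, ha2_14, ha3_14, ha4_14, ha5_14, ha5_20, ha6_20, ha7_20, ha8_20, ha9_20, ha10_20, ha11_20, ha12_20, ha13_20, ha14_20, hb8_6, hb9_3, hb9_6, hb10_2, hb10_3, hb11_1, hb11_8, hb12_4, hb13_7, hb14_2, hb15_3, hb15_5, hb16_3, hb17_2, hb18_1, hb18_7, hb19_4, hb19_5, hb20_1, hnn_a1, hnn_d1, hnn_a2, hnn_d2, hnn_a3, hnn_d3, hnn_a4, hnn_d4, hnn_a5, hnn_d5, hnn_a6, hnn_d6, hnn_a7, hnn_d7, hnn_a8, hnn_d8, hnn_a9, hnn_d9, hnn_a10, hnn_d10, hnn_a11, hnn_d11, hnn_a12, hnn_d12, hnn_a13, hnn_d13, hnn_a14, hnn_d14, hnn_a15, hnn_d15, hnn_a16, hnn_d16, hnn_a17, hnn_d17, hnn_a18, hnn_d18, hnn_a19, hnn_d19, hnn_a20, hnn_d20, hf0, hn0]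
  exact le_of_mul_le_mul_left hfin hn0

lemma sum_lift (g : ℕ → ℝ) {a b : ℕ} (hab : a ≤ b) :
    ∑ j ∈ Finset.Ioc (20 * a) (20 * b), g ((j + 19) / 20)
      = 20 * ∑ l ∈ Finset.Ioc a b, g l := by
  induction b, hab using Nat.le_induction with
  | base => simp
  | succ b hab ih =>
    rw [← Finset.sum_Ioc_consecutive _ (show 20 * a ≤ 20 * b by omega)
        (show 20 * b ≤ 20 * (b + 1) by omega), ih,
      Finset.sum_Ioc_succ_top hab]
    have hconst : ∑ j ∈ Finset.Ioc (20 * b) (20 * (b + 1)), g ((j + 19) / 20)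
        = 20 * g (b + 1) := by
      rw [Finset.sum_congr rfl (fun j hj => by
        have := Finset.mem_Ioc.mp hj
        congr 1
        omega : ∀ j ∈ Finset.Ioc (20 * b) (20 * (b + 1)),
          g ((j + 19) / 20) = g (b + 1)),
        Finset.sum_const, Nat.card_Ioc, show 20 * (b + 1) - 20 * b = 20 by omega,
        nsmul_eq_mul]
      norm_num
    rw [hconst]
    ring

lemma lift_feasible (k : ℕ) (α d : ℕ → ℝ) (f : ℝ) (hf : FRLP1Feasible k α d f) :
    FRLP1Feasible (20 * k) (fun j => α ((j + 19) / 20)) (fun j => d ((j + 19) / 20))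
      (20 * f) := by
  obtain ⟨hα, hd, hf0, hmono, hpair, hsum⟩ := hf
  refine ⟨?_, ?_, ?_, ?_, ?_, ?_⟩
  · intro j hj
    have := Finset.mem_Icc.mp hj
    exact hα _ (Finset.mem_Icc.mpr (by omega))
  · intro j hj
    have := Finset.mem_Icc.mp hj
    exact hd _ (Finset.mem_Icc.mpr (by omega))
  · linarith
  · intro j hj1 hjk
    show α ((j + 19) / 20) ≤ α ((j + 1 + 19) / 20)
    rcases (show (j + 1 + 19) / 20 = (j + 19) / 20 ∨
        (j + 1 + 19) / 20 = (j + 19) / 20 + 1 by omega) with h | h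
    · rw [h]
    · rw [h]
      exact hmono _ (by omega) (by omega)
  · intro j hj l hl
    have h1 := Finset.mem_Icc.mp hj
    have h2 := Finset.mem_Icc.mp hl
    exact hpair _ (Finset.mem_Icc.mpr (by omega)) _ (Finset.mem_Icc.mpr (by omega))
  · intro j hj
    have hjm := Finset.mem_Icc.mp hj
    show ∑ l ∈ Finset.Icc j (20 * k), max (α ((j + 19) / 20) - d ((l + 19) / 20)) 0 ≤ 20 * f
    have hsub : ∑ l ∈ Finset.Icc j (20 * k), max (α ((j + 19) / 20) - d ((l + 19) / 20)) 0
        ≤ ∑ l ∈ Finset.Ioc (20 * (((j + 19) / 20) - 1)) (20 * k),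
            max (α ((j + 19) / 20) - d ((l + 19) / 20)) 0 := by
      apply Finset.sum_le_sum_of_subset_of_nonneg
      · intro l hl
        have := Finset.mem_Icc.mp hl
        exact Finset.mem_Ioc.mpr (by omega)
      · intro l _ _
        exact le_max_right _ _
    have hre := sum_lift (fun l => max (α ((j + 19) / 20) - d l) 0)
      (show ((j + 19) / 20) - 1 ≤ k by omega)
    have he : Finset.Ioc (((j + 19) / 20) - 1) k = Finset.Icc ((j + 19) / 20) k := by
      ext x
      simp only [Finset.mem_Ioc, Finset.mem_Icc]
      omega
    rw [he] at hre
    have hb := hsum ((j + 19) / 20) (Finset.mem_Icc.mpr (by omega))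
    calc ∑ l ∈ Finset.Icc j (20 * k), max (α ((j + 19) / 20) - d ((l + 19) / 20)) 0
        ≤ _ := hsub
      _ = 20 * ∑ l ∈ Finset.Icc ((j + 19) / 20) k,
            max (α ((j + 19) / 20) - d l) 0 := hre
      _ ≤ 20 * f := by linarith
end FRLP1aux

open FRLP1aux in
/-- Every feasible solution of the first factor-revealing LP has objective value at most
`1.861 · (f + Σ d_j)`; in particular `z_k ≤ 1.861` for every `k ≥ 1`. -/
theorem frlp1_objective_le (k : ℕ) (hk : 1 ≤ k) (α d : ℕ → ℝ) (f : ℝ)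
    (hfeas : FRLP1Feasible k α d f) :
    ∑ j ∈ Finset.Icc 1 k, α j ≤ 1.861 * (f + ∑ j ∈ Finset.Icc 1 k, d j) := by
  have hlift := lift_feasible k α d f hfeas
  have hmain := main20 k hk _ _ _ hlift
  have eA : ∑ j ∈ Finset.Icc 1 (20 * k), α ((j + 19) / 20)
      = 20 * ∑ j ∈ Finset.Icc 1 k, α j := by
    rw [show Finset.Icc 1 (20 * k) = Finset.Ioc 0 (20 * k) from Finset.Icc_add_one_left_eq_Ioc 0 _,
      show Finset.Icc 1 k = Finset.Ioc 0 k from Finset.Icc_add_one_left_eq_Ioc 0 _]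
    simpa using sum_lift α (Nat.zero_le k)
  have eD : ∑ j ∈ Finset.Icc 1 (20 * k), d ((j + 19) / 20)
      = 20 * ∑ j ∈ Finset.Icc 1 k, d j := by
    rw [show Finset.Icc 1 (20 * k) = Finset.Ioc 0 (20 * k) from Finset.Icc_add_one_left_eq_Ioc 0 _,
      show Finset.Icc 1 k = Finset.Ioc 0 k from Finset.Icc_add_one_left_eq_Ioc 0 _]
    simpa using sum_lift d (Nat.zero_le k)
  rw [eA, eD] at hmain
  linarith
end

section
/- Let k ≥ 1 and let (α, d, f) be a feasible solution of the first factor-revealing LP with k indices. Define α'_{2i−1} = α'_{2i} = α_i and d'_{2i−1} = d'_{2i} = d_i for 1 ≤ i ≤ k, and f' = 2f. Then (α', d', f') is a feasible solution of the first factor-revealing LP with 2k indices, Σ_{j=1}^{2k} α'_j = 2 Σ_{j=1}^{k} α_j, and f' + Σ_{j=1}^{2k} d'_j = 2(f + Σ_{j=1}^{k} d_j). Consequently, the optimal value z_k of the first factor-revealing LP satisfies z_k ≤ z_{2k}. -/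
/-- The optimal value `z_k` of the first factor-revealing LP: the supremum of the
ratios `(Σ α_j) / (f + Σ d_j)` over all feasible solutions. -/
noncomputable def frlp1Value (k : ℕ) : ℝ :=
  sSup { z : ℝ | ∃ α d : ℕ → ℝ, ∃ f : ℝ, FRLP1Feasible k α d f ∧
    z = (∑ j ∈ Finset.Icc 1 k, α j) / (f + ∑ j ∈ Finset.Icc 1 k, d j) }

lemma frlp1_mono (α : ℕ → ℝ) (k : ℕ)
    (h : ∀ j, 1 ≤ j → j < k → α j ≤ α (j + 1)) :
    ∀ a b, 1 ≤ a → a ≤ b → b ≤ k → α a ≤ α b := by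
  intro a b ha hab hbk
  induction b with
  | zero => omega
  | succ n ih =>
    rcases Nat.lt_or_ge a (n + 1) with h1 | h2
    · exact le_trans (ih (by omega) (by omega)) (h n (by omega) (by omega))
    · have : a = n + 1 := by omega
      simp [this]

lemma double_sum (g : ℕ → ℝ) (m : ℕ) (hm : 1 ≤ m) :
    ∀ k, ∑ l ∈ Finset.Icc (2 * m - 1) (2 * k), g ((l + 1) / 2)
      = 2 * ∑ l ∈ Finset.Icc m k, g l := by
  intro k
  induction k with
  | zero =>
    rw [Finset.Icc_eq_empty (by omega), Finset.Icc_eq_empty (by omega)]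
    simp
  | succ n ih =>
    rcases Nat.lt_or_ge (n + 1) m with h1 | h2
    · rw [Finset.Icc_eq_empty (by omega), Finset.Icc_eq_empty (by omega)]
      simp
    · rw [show 2 * (n + 1) = (2 * n + 1) + 1 by ring]
      rw [Finset.sum_Icc_succ_top (by omega : 2 * m - 1 ≤ 2 * n + 1 + 1)]
      rw [Finset.sum_Icc_succ_top (by omega : 2 * m - 1 ≤ 2 * n + 1)]
      rw [Finset.sum_Icc_succ_top (by omega : m ≤ n + 1)]
      rw [ih]
      have e2 : (2 * n + 1 + 1) / 2 = n + 1 := by omega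
      have e3 : (2 * n + 1 + 1 + 1) / 2 = n + 1 := by omega
      rw [e2, e3]
      ring

lemma frlp1_double_feas (k : ℕ) (hk : 1 ≤ k) (α d : ℕ → ℝ) (f : ℝ)
    (hfeas : FRLP1Feasible k α d f) :
    FRLP1Feasible (2 * k) (fun j => α ((j + 1) / 2)) (fun j => d ((j + 1) / 2)) (2 * f) := by
  obtain ⟨hα0, hd0, hf0, hmono, hjl, hsum⟩ := hfeas
  refine ⟨?_, ?_, by linarith, ?_, ?_, ?_⟩
  · intro j hj
    rw [Finset.mem_Icc] at hj
    exact hα0 _ (Finset.mem_Icc.mpr (by omega))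
  · intro j hj
    rw [Finset.mem_Icc] at hj
    exact hd0 _ (Finset.mem_Icc.mpr (by omega))
  · intro j hj hjk
    exact frlp1_mono α k hmono ((j + 1) / 2) ((j + 1 + 1) / 2) (by omega) (by omega) (by omega)
  · intro j hj l hl
    rw [Finset.mem_Icc] at hj hl
    exact hjl _ (Finset.mem_Icc.mpr (by omega)) _ (Finset.mem_Icc.mpr (by omega))
  · intro j hj
    rw [Finset.mem_Icc] at hj
    set m := (j + 1) / 2 with hm
    have hm1 : 1 ≤ m := by omega
    have hmk : m ≤ k := by omega
    have hsub : Finset.Icc j (2 * k) ⊆ Finset.Icc (2 * m - 1) (2 * k) :=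
      Finset.Icc_subset_Icc_left (by omega)
    calc ∑ l ∈ Finset.Icc j (2 * k), max (α m - d ((l + 1) / 2)) 0
        ≤ ∑ l ∈ Finset.Icc (2 * m - 1) (2 * k), max (α m - d ((l + 1) / 2)) 0 := by
          apply Finset.sum_le_sum_of_subset_of_nonneg hsub
          intro i _ _; exact le_max_right _ _
      _ = 2 * ∑ l ∈ Finset.Icc m k, max (α m - d l) 0 :=
          double_sum (fun l => max (α m - d l) 0) m hm1 k
      _ ≤ 2 * f := by linarith [hsum m (Finset.mem_Icc.mpr ⟨hm1, hmk⟩)]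

lemma frlp1_mem_le (k : ℕ) (hk : 1 ≤ k) (z : ℝ)
    (hz : z ∈ { z : ℝ | ∃ α d : ℕ → ℝ, ∃ f : ℝ, FRLP1Feasible k α d f ∧
      z = (∑ j ∈ Finset.Icc 1 k, α j) / (f + ∑ j ∈ Finset.Icc 1 k, d j) }) :
    z ≤ (k : ℝ) := by
  obtain ⟨α, d, f, ⟨hα0, hd0, hf0, hmono, hjl, hsum⟩, rfl⟩ := hz
  have hD0 : 0 ≤ f + ∑ j ∈ Finset.Icc 1 k, d j :=
    add_nonneg hf0 (Finset.sum_nonneg hd0)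
  rcases eq_or_lt_of_le hD0 with heq | hpos
  · rw [← heq, div_zero]
    exact Nat.cast_nonneg k
  · rw [div_le_iff₀ hpos]
    have hkmem : k ∈ Finset.Icc 1 k := Finset.mem_Icc.mpr ⟨hk, le_rfl⟩
    have hαk : α k ≤ f + d k := by
      have := hsum k hkmem
      rw [Finset.Icc_self, Finset.sum_singleton] at this
      have h2 := le_max_left (α k - d k) 0
      linarith
    have hsumα : ∑ j ∈ Finset.Icc 1 k, α j ≤ (k : ℝ) * α k := by
      calc ∑ j ∈ Finset.Icc 1 k, α j ≤ ∑ _j ∈ Finset.Icc 1 k, α k := by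
            refine Finset.sum_le_sum fun j hj => ?_
            rw [Finset.mem_Icc] at hj
            exact frlp1_mono α k hmono j k hj.1 hj.2 le_rfl
        _ = (k : ℝ) * α k := by
            rw [Finset.sum_const, Nat.card_Icc, nsmul_eq_mul]
            norm_num
    have hdk : d k ≤ ∑ j ∈ Finset.Icc 1 k, d j :=
      Finset.single_le_sum hd0 hkmem
    have hk0 : (0 : ℝ) ≤ k := Nat.cast_nonneg k
    nlinarith

/-- Doubling a feasible solution of the first factor-revealing LP with `k` indices yields a
feasible solution with `2k` indices whose objective and cost both double; hence `z_k ≤ z_{2k}`. -/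
theorem frlp1_doubling (k : ℕ) (hk : 1 ≤ k) (α d : ℕ → ℝ) (f : ℝ)
    (hfeas : FRLP1Feasible k α d f) :
    FRLP1Feasible (2 * k) (fun j => α ((j + 1) / 2)) (fun j => d ((j + 1) / 2)) (2 * f) ∧
    ∑ j ∈ Finset.Icc 1 (2 * k), α ((j + 1) / 2) = 2 * ∑ j ∈ Finset.Icc 1 k, α j ∧
    2 * f + ∑ j ∈ Finset.Icc 1 (2 * k), d ((j + 1) / 2)
      = 2 * (f + ∑ j ∈ Finset.Icc 1 k, d j) ∧
    frlp1Value k ≤ frlp1Value (2 * k) := by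
  have hs1 := double_sum α 1 le_rfl k
  have hs2 := double_sum d 1 le_rfl k
  norm_num at hs1 hs2
  refine ⟨frlp1_double_feas k hk α d f hfeas, hs1, by rw [hs2]; ring, ?_⟩
  unfold frlp1Value
  apply csSup_le_csSup
  · refine ⟨((2 * k : ℕ) : ℝ), fun z hz => frlp1_mem_le (2 * k) (by omega) z hz⟩
  · exact ⟨_, α, d, f, hfeas, rfl⟩
  · rintro z ⟨α', d', f', hfe, rfl⟩
    refine ⟨fun j => α' ((j + 1) / 2), fun j => d' ((j + 1) / 2), 2 * f',
      frlp1_double_feas k hk α' d' f' hfe, ?_⟩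
    have ha := double_sum α' 1 le_rfl k
    have hd := double_sum d' 1 le_rfl k
    norm_num at ha hd
    rw [ha, hd, show 2 * f' + 2 * ∑ j ∈ Finset.Icc 1 k, d' j
        = 2 * (f' + ∑ j ∈ Finset.Icc 1 k, d' j) by ring,
      mul_div_mul_left _ _ (two_ne_zero)]
end

section
/- Let k ≥ 1 and let (α, d, f) be a feasible solution of the first factor-revealing LP. Then for all indices 1 ≤ j ≤ j' ≤ k one has (j' − j + 1) · α_j ≤ f + Σ_{i=j}^{j'} d_i. -/
/-- For a feasible solution of the first factor-revealing LP,
`(j' − j + 1) · α_j ≤ f + Σ_{i=j}^{j'} d_i` for all `1 ≤ j ≤ j' ≤ k`. -/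
theorem frlp1_interval_bound (k : ℕ) (hk : 1 ≤ k) (α d : ℕ → ℝ) (f : ℝ)
    (hfeas : FRLP1Feasible k α d f) (j j' : ℕ) (hj : 1 ≤ j) (hjj' : j ≤ j') (hj' : j' ≤ k) :
    ((j' - j + 1 : ℕ) : ℝ) * α j ≤ f + ∑ i ∈ Finset.Icc j j', d i := by
  obtain ⟨-, -, -, -, -, h3⟩ := hfeas
  have hjk : j ∈ Finset.Icc 1 k := Finset.mem_Icc.mpr ⟨hj, hjj'.trans hj'⟩
  have h1 : ∑ l ∈ Finset.Icc j j', max (α j - d l) 0 ≤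
      ∑ l ∈ Finset.Icc j k, max (α j - d l) 0 := by
    apply Finset.sum_le_sum_of_subset_of_nonneg
    · exact Finset.Icc_subset_Icc_right hj'
    · intro i _ _; exact le_max_right _ _
  have h2 : ∑ l ∈ Finset.Icc j j', (α j - d l) ≤
      ∑ l ∈ Finset.Icc j j', max (α j - d l) 0 :=
    Finset.sum_le_sum fun i _ => le_max_left _ _
  have h4 := (h2.trans h1).trans (h3 j hjk)
  have hcard : (Finset.Icc j j').card = j' - j + 1 := by
    rw [Nat.card_Icc]; omega
  rw [Finset.sum_sub_distrib, Finset.sum_const, hcard, nsmul_eq_mul] at h4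
  linarith
end

section
/- Let k ≥ 1 and let (α, d, f) be a feasible solution of the first factor-revealing LP. Define a cost matrix c between facilities i ∈ {1, …, k+1} and cities j ∈ {1, …, k} by: c_{ij} = α_j if 1 ≤ i = j ≤ k; c_{ij} = d_j if i = k+1; and c_{ij} = d_i + d_j + α_i otherwise (i.e., if 1 ≤ i ≤ k and i ≠ j). Then c satisfies the triangle inequality for bipartite connection costs: for all facilities i, i' ∈ {1, …, k+1} and all cities j, j' ∈ {1, …, k}, c_{ij} ≤ c_{i'j} + c_{i'j'} + c_{ij'}. -/
/-- The tight-example cost matrix built from a feasible solution of the first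
factor-revealing LP: facilities are `1,…,k+1`, cities are `1,…,k`. -/
noncomputable def tightCost (k : ℕ) (α d : ℕ → ℝ) (i j : ℕ) : ℝ :=
  if i = k + 1 then d j
  else if i = j then α j
  else d i + d j + α i

/-- The cost matrix of the tight example satisfies the triangle inequality for
bipartite connection costs: `c_{ij} ≤ c_{i'j} + c_{i'j'} + c_{ij'}`. -/
theorem tightCost_triangle (k : ℕ) (hk : 1 ≤ k) (α d : ℕ → ℝ) (f : ℝ)
    (hfeas : FRLP1Feasible k α d f) :
    ∀ i ∈ Finset.Icc 1 (k + 1), ∀ i' ∈ Finset.Icc 1 (k + 1),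
      ∀ j ∈ Finset.Icc 1 k, ∀ j' ∈ Finset.Icc 1 k,
        tightCost k α d i j ≤ tightCost k α d i' j + tightCost k α d i' j' + tightCost k α d i j' := by
  obtain ⟨hα, hd, -, -, -, -⟩ := hfeas
  intro i hi i' hi' j hj j' hj'
  simp only [Finset.mem_Icc] at hi hi' hj hj'
  have Hi : i = k + 1 ∨ (0 ≤ α i ∧ 0 ≤ d i) := by
    rcases Nat.eq_or_lt_of_le hi.2 with h | h
    · exact Or.inl h
    · exact Or.inr ⟨hα i (Finset.mem_Icc.mpr ⟨hi.1, by omega⟩),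
        hd i (Finset.mem_Icc.mpr ⟨hi.1, by omega⟩)⟩
  have Hi' : i' = k + 1 ∨ (0 ≤ α i' ∧ 0 ≤ d i') := by
    rcases Nat.eq_or_lt_of_le hi'.2 with h | h
    · exact Or.inl h
    · exact Or.inr ⟨hα i' (Finset.mem_Icc.mpr ⟨hi'.1, by omega⟩),
        hd i' (Finset.mem_Icc.mpr ⟨hi'.1, by omega⟩)⟩
  have hαj : 0 ≤ α j := hα j (Finset.mem_Icc.mpr hj)
  have hdj : 0 ≤ d j := hd j (Finset.mem_Icc.mpr hj)
  have hαj' : 0 ≤ α j' := hα j' (Finset.mem_Icc.mpr hj')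
  have hdj' : 0 ≤ d j' := hd j' (Finset.mem_Icc.mpr hj')
  unfold tightCost
  rcases Hi with hi1 | ⟨hαi, hdi⟩ <;> rcases Hi' with hi'1 | ⟨hαi', hdi'⟩ <;>
    split_ifs <;> first | omega | (subst_vars; linarith) | linarith
end

section
/- Let k ≥ 1 and let (α, d, r, f) be a feasible solution of the second factor-revealing LP. Then for all indices 1 ≤ i ≤ i' ≤ k one has (i' − i + 1) · α_i ≤ Σ_{j=i}^{i'} d_j + f − Σ_{j=1}^{i−1} max(r_{j,i} − d_j, 0). -/
/-- Feasibility for the second factor-revealing LP with `k` indices `1,…,k`.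
`r j i` is the variable `r_{j,i}` for `1 ≤ j < i ≤ k`. -/
def FRLP2Feasible (k : ℕ) (α d : ℕ → ℝ) (r : ℕ → ℕ → ℝ) (f : ℝ) : Prop :=
  (∀ i ∈ Finset.Icc 1 k, 0 ≤ α i) ∧
  (∀ i ∈ Finset.Icc 1 k, 0 ≤ d i) ∧
  0 ≤ f ∧
  (∀ j i, 1 ≤ j → j < i → i ≤ k → 0 ≤ r j i) ∧
  (∀ i, 1 ≤ i → i < k → α i ≤ α (i + 1)) ∧
  (∀ j i, 1 ≤ j → j < i → i < k → r j (i + 1) ≤ r j i) ∧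
  (∀ j i, 1 ≤ j → j < i → i ≤ k → α i ≤ r j i + d i + d j) ∧
  (∀ i ∈ Finset.Icc 1 k,
    ∑ j ∈ Finset.Icc 1 (i - 1), max (r j i - d j) 0
      + ∑ j ∈ Finset.Icc i k, max (α i - d j) 0 ≤ f)

/-- For a feasible solution of the second factor-revealing LP, for all `1 ≤ i ≤ i' ≤ k`,
`(i' − i + 1) · α_i ≤ Σ_{j=i}^{i'} d_j + f − Σ_{j=1}^{i−1} max(r_{j,i} − d_j, 0)`. -/
theorem frlp2_interval_bound (k : ℕ) (hk : 1 ≤ k) (α d : ℕ → ℝ) (r : ℕ → ℕ → ℝ) (f : ℝ)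
    (hfeas : FRLP2Feasible k α d r f) (i i' : ℕ) (hi : 1 ≤ i) (hii' : i ≤ i') (hi' : i' ≤ k) :
    ((i' - i + 1 : ℕ) : ℝ) * α i
      ≤ (∑ j ∈ Finset.Icc i i', d j) + f - ∑ j ∈ Finset.Icc 1 (i - 1), max (r j i - d j) 0 := by
  obtain ⟨-, -, -, -, -, -, -, h4⟩ := hfeas
  have hik : i ≤ k := le_trans hii' hi'
  have hmem : i ∈ Finset.Icc 1 k := Finset.mem_Icc.mpr ⟨hi, hik⟩
  have hkey := h4 i hmem
  have h1 : ∑ j ∈ Finset.Icc i i', (α i - d j) ≤ ∑ j ∈ Finset.Icc i i', max (α i - d j) 0 :=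
    Finset.sum_le_sum fun j _ => le_max_left _ _
  have h2 : ∑ j ∈ Finset.Icc i i', max (α i - d j) 0 ≤ ∑ j ∈ Finset.Icc i k, max (α i - d j) 0 :=
    Finset.sum_le_sum_of_subset_of_nonneg (Finset.Icc_subset_Icc_right hi')
      (fun j _ _ => le_max_right _ _)
  have hcard : ∑ j ∈ Finset.Icc i i', (α i - d j)
      = ((i' - i + 1 : ℕ) : ℝ) * α i - ∑ j ∈ Finset.Icc i i', d j := by
    have he : i' + 1 - i = i' - i + 1 := by omega
    rw [Finset.sum_sub_distrib, Finset.sum_const, Nat.card_Icc, nsmul_eq_mul, he]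
  linarith
end

section
/- Let k ≥ 1 and let (α, d, r, f) be a feasible solution of the second factor-revealing LP. Then for all indices 1 ≤ ℓ < m ≤ i ≤ k one has α_i ≤ d_i + 2·d_ℓ + max(r_{ℓ,m} − d_ℓ, 0). -/
/-- For a feasible solution of the second factor-revealing LP, for all `1 ≤ ℓ < m ≤ i ≤ k`,
`α_i ≤ d_i + 2·d_ℓ + max(r_{ℓ,m} − d_ℓ, 0)`. -/
theorem frlp2_switch_bound (k : ℕ) (hk : 1 ≤ k) (α d : ℕ → ℝ) (r : ℕ → ℕ → ℝ) (f : ℝ)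
    (hfeas : FRLP2Feasible k α d r f) (l m i : ℕ) (hl : 1 ≤ l) (hlm : l < m) (hmi : m ≤ i)
    (hik : i ≤ k) :
    α i ≤ d i + 2 * d l + max (r l m - d l) 0 := by
  obtain ⟨-, -, -, -, -, hrdec, hiii, -⟩ := hfeas
  have hmono : ∀ n, m ≤ n → n ≤ k → r l n ≤ r l m := by
    intro n hn
    induction n with
    | zero => omega
    | succ p ih =>
      intro hpk
      rcases Nat.lt_or_ge m (p + 1) with h | h
      · have hp : p < k := by omega
        have := hrdec l p hl (by omega) hp
        exact this.trans (ih (by omega) (by omega))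
      · have : m = p + 1 := by omega
        simp [this]
  have h1 : α i ≤ r l i + d i + d l := hiii l i hl (by omega) hik
  have h2 : r l i ≤ r l m := hmono i hmi hik
  have h3 : r l m - d l ≤ max (r l m - d l) 0 := le_max_left _ _
  linarith
end

section
/- For every integer k ≥ 1 and every feasible solution (α, d, r, f) of the second factor-revealing LP, one has Σ_{i=1}^{k} α_i − f ≤ (2 − 1/k) · Σ_{i=1}^{k} d_i. In particular, Σ_{i=1}^{k} α_i ≤ f + 2 · Σ_{i=1}^{k} d_i. -/
lemma frlp2_split_sum (d : ℕ → ℝ) {i k : ℕ} (h1 : 1 ≤ i) (h2 : i ≤ k) :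
    ∑ j ∈ Finset.Icc 1 (i - 1), d j + ∑ j ∈ Finset.Icc i k, d j
      = ∑ j ∈ Finset.Icc 1 k, d j := by
  have e1 : Finset.Icc i k = Finset.Ioc (i - 1) k := by
    rw [← Finset.Icc_add_one_left_eq_Ioc]; congr 1; omega
  have e2 : Finset.Icc 1 (i - 1) = Finset.Ioc 0 (i - 1) := by
    rw [← Finset.Icc_add_one_left_eq_Ioc, zero_add]
  have e3 : Finset.Icc 1 k = Finset.Ioc 0 k := by rw [← Finset.Icc_add_one_left_eq_Ioc, zero_add]
  rw [e1, e2, e3, Finset.sum_Ioc_consecutive] <;> omega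

lemma frlp2_tri_sum (d : ℕ → ℝ) (k : ℕ) :
    ∑ i ∈ Finset.Icc 1 k, (((i : ℝ) - 1) * d i + ∑ j ∈ Finset.Icc 1 (i - 1), d j)
      = ((k : ℝ) - 1) * ∑ i ∈ Finset.Icc 1 k, d i := by
  induction k with
  | zero => simp
  | succ n ih =>
      rw [Finset.sum_Icc_succ_top (by omega), Finset.sum_Icc_succ_top (by omega), ih]
      have : (n + 1) - 1 = n := rfl
      rw [this]
      push_cast
      ring

/-- For every feasible solution of the second factor-revealing LP,
`Σ α_i − f ≤ (2 − 1/k) · Σ d_i`; in particular `Σ α_i ≤ f + 2 Σ d_i`. -/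
theorem frlp2_lmp_bound (k : ℕ) (hk : 1 ≤ k) (α d : ℕ → ℝ) (r : ℕ → ℕ → ℝ) (f : ℝ)
    (hfeas : FRLP2Feasible k α d r f) :
    (∑ i ∈ Finset.Icc 1 k, α i) - f ≤ (2 - 1 / (k : ℝ)) * ∑ i ∈ Finset.Icc 1 k, d i ∧
    ∑ i ∈ Finset.Icc 1 k, α i ≤ f + 2 * ∑ i ∈ Finset.Icc 1 k, d i := by
  obtain ⟨hα, hd, hf, hr, hmono, hrmono, h3, h4⟩ := hfeas
  set D : ℝ := ∑ i ∈ Finset.Icc 1 k, d i with hD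
  have hDnn : 0 ≤ D := Finset.sum_nonneg hd
  -- per-index bound
  have key : ∀ i ∈ Finset.Icc 1 k,
      (k : ℝ) * α i ≤ f + ((i : ℝ) - 1) * d i + ∑ j ∈ Finset.Icc 1 (i - 1), d j + D := by
    intro i hi
    rw [Finset.mem_Icc] at hi
    obtain ⟨hi1, hik⟩ := hi
    have hA : ∀ j ∈ Finset.Icc 1 (i - 1), α i - d i - 2 * d j ≤ max (r j i - d j) 0 := by
      intro j hj
      rw [Finset.mem_Icc] at hj
      have := h3 j i hj.1 (by omega) hik
      have := le_max_left (r j i - d j) 0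
      linarith
    have hB : ∀ j ∈ Finset.Icc i k, α i - d j ≤ max (α i - d j) 0 := by
      intro j _; exact le_max_left _ _
    have hsA : ∑ j ∈ Finset.Icc 1 (i - 1), (α i - d i - 2 * d j)
        ≤ ∑ j ∈ Finset.Icc 1 (i - 1), max (r j i - d j) 0 := Finset.sum_le_sum hA
    have hsB : ∑ j ∈ Finset.Icc i k, (α i - d j)
        ≤ ∑ j ∈ Finset.Icc i k, max (α i - d j) 0 := Finset.sum_le_sum hB
    have h4i := h4 i (Finset.mem_Icc.mpr ⟨hi1, hik⟩)
    have cA : ∑ j ∈ Finset.Icc 1 (i - 1), (α i - d i - 2 * d j)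
        = ((i : ℝ) - 1) * (α i - d i) - 2 * ∑ j ∈ Finset.Icc 1 (i - 1), d j := by
      rw [Finset.sum_sub_distrib, Finset.sum_const, ← Finset.mul_sum,
        Nat.card_Icc, nsmul_eq_mul]
      have : ((i - 1 + 1 - 1 : ℕ) : ℝ) = (i : ℝ) - 1 := by
        rw [show i - 1 + 1 - 1 = i - 1 from rfl, Nat.cast_sub hi1]; push_cast; ring
      rw [this]
    have cB : ∑ j ∈ Finset.Icc i k, (α i - d j)
        = ((k : ℝ) + 1 - (i : ℝ)) * α i - ∑ j ∈ Finset.Icc i k, d j := by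
      rw [Finset.sum_sub_distrib, Finset.sum_const, Nat.card_Icc, nsmul_eq_mul]
      have : ((k + 1 - i : ℕ) : ℝ) = (k : ℝ) + 1 - (i : ℝ) := by
        rw [Nat.cast_sub (by omega)]; push_cast; ring
      rw [this]
    have hsplit := frlp2_split_sum d hi1 hik
    rw [cA] at hsA
    rw [cB] at hsB
    rw [← hD] at hsplit
    nlinarith [hsA, hsB, h4i, hsplit]
  have hsum : (k : ℝ) * ∑ i ∈ Finset.Icc 1 k, α i
      ≤ (k : ℝ) * f + ((k : ℝ) - 1) * D + (k : ℝ) * D := by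
    rw [Finset.mul_sum]
    calc ∑ i ∈ Finset.Icc 1 k, (k : ℝ) * α i
        ≤ ∑ i ∈ Finset.Icc 1 k,
            (f + ((i : ℝ) - 1) * d i + ∑ j ∈ Finset.Icc 1 (i - 1), d j + D) :=
          Finset.sum_le_sum key
      _ = (k : ℝ) * f + ((k : ℝ) - 1) * D + (k : ℝ) * D := by
          have : ∀ i : ℕ, f + ((i : ℝ) - 1) * d i + ∑ j ∈ Finset.Icc 1 (i - 1), d j + D
              = (f + D) + (((i : ℝ) - 1) * d i + ∑ j ∈ Finset.Icc 1 (i - 1), d j) := by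
            intro i; ring
          simp only [this]
          rw [Finset.sum_add_distrib, Finset.sum_const, frlp2_tri_sum, Nat.card_Icc,
            nsmul_eq_mul]
          have : ((k + 1 - 1 : ℕ) : ℝ) = (k : ℝ) := by
            rw [show k + 1 - 1 = k from rfl]
          rw [this, ← hD]
          ring
  have hk0 : (0 : ℝ) < (k : ℝ) := by exact_mod_cast hk
  have first : (∑ i ∈ Finset.Icc 1 k, α i) - f ≤ (2 - 1 / (k : ℝ)) * D := by
    have hexp : (k : ℝ) * ((2 - 1 / (k : ℝ)) * D) = (2 * (k : ℝ) - 1) * D := by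
      field_simp
    have : (k : ℝ) * ((∑ i ∈ Finset.Icc 1 k, α i) - f)
        ≤ (k : ℝ) * ((2 - 1 / (k : ℝ)) * D) := by
      rw [hexp]; nlinarith [hsum]
      
    exact le_of_mul_le_mul_left this hk0
  refine ⟨first, ?_⟩
  have h1k : 0 < 1 / (k : ℝ) := by positivity
  nlinarith [first, mul_nonneg (le_of_lt h1k) hDnn]
end

section
/- Let k ≥ 2. Define α_1 = 2 − 1/k and α_i = 2 for 2 ≤ i ≤ k; d_1 = 1 and d_i = 0 for 2 ≤ i ≤ k; r_{1,i} = 1 for 1 < i ≤ k and r_{j,i} = 2 for 2 ≤ j < i ≤ k; and f = 2(k − 1). Then (α, d, r, f) is a feasible solution of the second factor-revealing LP, and it satisfies Σ_{i=1}^{k} α_i − f = (2 − 1/k) · Σ_{i=1}^{k} d_i (with Σ_{i=1}^{k} d_i = 1). Hence the bound Σ α_i − f ≤ (2 − 1/k) Σ d_i for feasible solutions of the second factor-revealing LP is tight. -/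
lemma sum_ite_icc (k : ℕ) (hk : 1 ≤ k) (a b : ℝ) :
    ∑ i ∈ Finset.Icc 1 k, (if i = 1 then a else b) = a + ((k : ℝ) - 1) * b := by
  have h : Finset.Icc 1 k = insert 1 (Finset.Icc 2 k) := by
    ext x; simp [Finset.mem_Icc]; omega
  have h1 : (1 : ℕ) ∉ Finset.Icc 2 k := by simp
  rw [h, Finset.sum_insert h1, if_pos rfl]
  have h2 : ∑ i ∈ Finset.Icc 2 k, (if i = 1 then a else b) = ∑ i ∈ Finset.Icc 2 k, b := by
    apply Finset.sum_congr rfl; intro x hx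
    simp [Finset.mem_Icc] at hx; rw [if_neg]; omega
  rw [h2, Finset.sum_const, Nat.card_Icc, nsmul_eq_mul]
  have h3 : ((k + 1 - 2 : ℕ) : ℝ) = (k : ℝ) - 1 := by
    have : k + 1 - 2 = k - 1 := by omega
    rw [this]; push_cast [hk]; ring
  rw [h3]

/-- The explicit tight example for the bound `Σ α_i − f ≤ (2 − 1/k) Σ d_i`:
`α_1 = 2 − 1/k`, `α_i = 2` otherwise; `d_1 = 1`, `d_i = 0` otherwise;
`r_{1,i} = 1`, `r_{j,i} = 2` for `j ≥ 2`; `f = 2(k−1)`. -/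
theorem frlp2_lmp_tight (k : ℕ) (hk : 2 ≤ k) :
    FRLP2Feasible k (fun i => if i = 1 then 2 - 1 / (k : ℝ) else 2)
      (fun i => if i = 1 then 1 else 0)
      (fun j _ => if j = 1 then 1 else 2)
      (2 * ((k : ℝ) - 1)) ∧
    (∑ i ∈ Finset.Icc 1 k, (if i = 1 then 2 - 1 / (k : ℝ) else 2)) - 2 * ((k : ℝ) - 1)
      = (2 - 1 / (k : ℝ)) * ∑ i ∈ Finset.Icc 1 k, (if i = 1 then (1 : ℝ) else 0) ∧
    ∑ i ∈ Finset.Icc 1 k, (if i = 1 then (1 : ℝ) else 0) = 1 := by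
  have hk2 : (2 : ℝ) ≤ (k : ℝ) := by exact_mod_cast hk
  have hkpos : (0 : ℝ) < (k : ℝ) := by linarith
  have hinv0 : (0 : ℝ) ≤ 1 / (k : ℝ) := by positivity
  have hinv1 : 1 / (k : ℝ) ≤ 1 := by rw [div_le_one hkpos]; linarith
  refine ⟨⟨?_, ?_, ?_, ?_, ?_, ?_, ?_, ?_⟩, ?_, ?_⟩
  · intro i _; dsimp only; split_ifs <;> linarith
  · intro i _; dsimp only; split_ifs <;> norm_num
  · linarith
  · intro j i _ _ _; dsimp only; split_ifs <;> norm_num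
  · intro i h1 h2; dsimp only; split_ifs <;> first | omega | linarith
  · intro j i _ _ _; exact le_refl _
  · intro j i hj hji hik; dsimp only
    split_ifs <;> first | omega | linarith
  · intro i hi
    simp only [Finset.mem_Icc] at hi
    obtain ⟨hi1, hik⟩ := hi
    by_cases h1 : i = 1
    · subst h1
      have hemp : Finset.Icc 1 (1 - 1) = (∅ : Finset ℕ) := by simp
      rw [hemp, Finset.sum_empty, zero_add]
      have key : ∑ j ∈ Finset.Icc 1 k,
          max ((if (1:ℕ) = 1 then 2 - 1 / (k:ℝ) else 2) - (if j = 1 then (1:ℝ) else 0)) 0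
          = (1 - 1/(k:ℝ)) + ((k:ℝ) - 1) * (2 - 1/(k:ℝ)) := by
        rw [← sum_ite_icc k (by omega)]
        apply Finset.sum_congr rfl; intro x _
        by_cases h : x = 1
        · rw [if_pos rfl, if_pos h, if_pos h,
            show (2 - 1/(k:ℝ)) - 1 = 1 - 1/(k:ℝ) by ring, max_eq_left (by linarith)]
        · rw [if_pos rfl, if_neg h, if_neg h, sub_zero, max_eq_left (by linarith)]
      rw [key]
      have : (1 - 1/(k:ℝ)) + ((k:ℝ) - 1) * (2 - 1/(k:ℝ)) = 2 * ((k:ℝ) - 1) := by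
        field_simp; ring
      linarith
    · -- i ≥ 2
      have hi2 : 2 ≤ i := by omega
      have hfirst : ∑ j ∈ Finset.Icc 1 (i - 1),
          max ((if j = 1 then (1:ℝ) else 2) - (if j = 1 then 1 else 0)) 0
          = ∑ j ∈ Finset.Icc 1 (i - 1), (if j = 1 then (0:ℝ) else 2) := by
        apply Finset.sum_congr rfl; intro x _
        split_ifs <;> norm_num
      have hfirst' : ∀ j ∈ Finset.Icc 1 (i - 1),
          max ((if j = 1 then (1:ℝ) else 2) - (if j = 1 then (1:ℝ) else 0)) 0
          = (if j = 1 then (0:ℝ) else 2) := by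
        intro x _; split_ifs <;> norm_num
      have hsec : ∀ j ∈ Finset.Icc i k,
          max ((if i = 1 then 2 - 1/(k:ℝ) else 2) - (if j = 1 then (1:ℝ) else 0)) 0
          = (2:ℝ) := by
        intro x hx; simp only [Finset.mem_Icc] at hx
        rw [if_neg h1, if_neg (by omega : x ≠ 1), sub_zero, max_eq_left (by norm_num)]
      rw [Finset.sum_congr rfl hfirst', Finset.sum_congr rfl hsec,
        sum_ite_icc (i - 1) (by omega), Finset.sum_const, Nat.card_Icc, nsmul_eq_mul]
      have c1 : ((i - 1 : ℕ) : ℝ) = (i:ℝ) - 1 := by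
        push_cast [Nat.cast_sub (by omega : 1 ≤ i)]; ring
      have c2 : ((k + 1 - i : ℕ) : ℝ) = (k:ℝ) + 1 - (i:ℝ) := by
        push_cast [Nat.cast_sub (by omega : i ≤ k + 1)]; ring
      rw [c1, c2]
      linarith
  · rw [sum_ite_icc k (by omega), sum_ite_icc k (by omega)]; ring
  · rw [sum_ite_icc k (by omega)]; ring
end

section
/- Let F and C be finite sets (of facilities and cities), let f : F → ℝ with f_i ≥ 0 for all i, let c : F × C → ℝ with c_{ij} ≥ 0 for all i, j, let α : C → ℝ, and let γ ≥ 0. Suppose that for every facility i ∈ F and every subset A ⊆ C, Σ_{j ∈ A} α_j ≤ γ · (f_i + Σ_{j ∈ A} c_{ij}). Then for every assignment φ : C → F, Σ_{j ∈ C} α_j ≤ γ · (Σ_{i ∈ φ(C)} f_i + Σ_{j ∈ C} c_{φ(j), j}), where φ(C) denotes the image of φ. In particular, Σ_{j ∈ C} α_j is at most γ times the total cost (facility opening cost plus connection cost) of any feasible solution of the facility location instance (F, C, f, c). -/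
/-- If the contributions `α_j` are paid for by every star up to a factor `γ`
(i.e. `Σ_{j ∈ A} α_j ≤ γ (f_i + Σ_{j ∈ A} c_{ij})` for every facility `i` and set `A` of
cities), then `Σ_j α_j` is at most `γ` times the total cost of any feasible solution of
the facility location instance, namely any assignment `φ` of cities to facilities. -/
theorem dual_fitting_bound {F C : Type*} [Fintype F] [Fintype C] [DecidableEq F]
    (f : F → ℝ) (c : F → C → ℝ) (α : C → ℝ) (γ : ℝ)
    (hf : ∀ i, 0 ≤ f i) (hc : ∀ i j, 0 ≤ c i j) (hγ : 0 ≤ γ)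
    (hstar : ∀ (i : F) (A : Finset C), ∑ j ∈ A, α j ≤ γ * (f i + ∑ j ∈ A, c i j)) :
    ∀ φ : C → F,
      ∑ j : C, α j ≤ γ * (∑ i ∈ Finset.univ.image φ, f i + ∑ j : C, c (φ j) j) := by
  intro φ
  classical
  have h1 : ∑ j : C, α j =
      ∑ i ∈ Finset.univ.image φ, ∑ j ∈ Finset.univ.filter (fun j => φ j = i), α j := by
    rw [← Finset.sum_fiberwise_of_maps_to (fun j _ => Finset.mem_image_of_mem φ (Finset.mem_univ j))]
  have h2 : ∑ j : C, c (φ j) j =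
      ∑ i ∈ Finset.univ.image φ, ∑ j ∈ Finset.univ.filter (fun j => φ j = i), c i j := by
    rw [← Finset.sum_fiberwise_of_maps_to (fun j _ => Finset.mem_image_of_mem φ (Finset.mem_univ j))]
    apply Finset.sum_congr rfl
    intro i _
    apply Finset.sum_congr rfl
    intro j hj
    rw [(Finset.mem_filter.mp hj).2]
  rw [h1, h2, mul_add, Finset.mul_sum, Finset.mul_sum, ← Finset.sum_add_distrib]
  apply Finset.sum_le_sum
  intro i _
  rw [← mul_add]
  exact hstar i _
end

section
/- Let 0 < p_1 < p_2 < 1 be real numbers. For each positive integer k define l_i = ⌊p_2 k⌋ for 1 ≤ i ≤ ⌊p_1 k⌋ and l_i = k for ⌊p_1 k⌋ < i ≤ ⌊p_2 k⌋, and set ζ_k = Σ_{i=1}^{⌊p_2 k⌋} 1/(l_i − i + 1). Then ζ_k converges, as k → ∞, to ln( p_2 (1 − p_1) / ((p_2 − p_1)(1 − p_2)) ) = ln(p_2/(p_2 − p_1)) + ln((1 − p_1)/(1 − p_2)). -/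
open Filter Real Finset Topology

noncomputable def Hr (n : ℕ) : ℝ := (harmonic n : ℝ)

lemma Hr_succ (n : ℕ) : Hr (n + 1) = Hr n + 1 / ((n : ℝ) + 1) := by
  simp only [Hr, harmonic_succ]
  push_cast
  ring

lemma sum_Ioc_inv (k a b : ℕ) (hab : a ≤ b) (hbk : b ≤ k) :
    ∑ i ∈ Finset.Ioc a b, (1 : ℝ) / ((k - i + 1 : ℕ) : ℝ) = Hr (k - a) - Hr (k - b) := by
  induction b, hab using Nat.le_induction with
  | base => simp
  | succ b hab ih =>
    rw [Finset.sum_Ioc_succ_top (by omega), ih (by omega)]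
    have h2 : k - b = (k - (b + 1)) + 1 := by omega
    rw [h2, Hr_succ]
    have h3 : ((k - (b + 1) + 1 : ℕ) : ℝ) = ((k - (b + 1) : ℕ) : ℝ) + 1 := by push_cast; ring
    rw [h3]; ring

lemma floor_div_tendsto (p : ℝ) (hp : 0 < p) :
    Tendsto (fun k : ℕ => (⌊p * (k : ℝ)⌋₊ : ℝ) / k) atTop (𝓝 p) := by
  have hlow : Tendsto (fun k : ℕ => p - 1 / (k : ℝ)) atTop (𝓝 p) := by
    simpa using tendsto_const_nhds.sub (tendsto_one_div_atTop_nhds_zero_nat (𝕜 := ℝ))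
  refine tendsto_of_tendsto_of_tendsto_of_le_of_le' hlow tendsto_const_nhds ?_ ?_
  · filter_upwards [eventually_ge_atTop 1] with k hk
    have hk0 : (0 : ℝ) < k := by exact_mod_cast hk
    rw [sub_le_iff_le_add, ← add_div, le_div_iff₀ hk0]
    have := Nat.sub_one_lt_floor (p * k)
    nlinarith [this]
  · filter_upwards [eventually_ge_atTop 1] with k hk
    have hk0 : (0 : ℝ) < k := by exact_mod_cast hk
    rw [div_le_iff₀ hk0]
    exact (Nat.floor_le (by positivity)).trans (by nlinarith)

lemma Hr_diff_tendsto (f g : ℕ → ℕ) (α β : ℝ) (hα : 0 < α) (hβ : 0 < β)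
    (hf : Tendsto (fun k : ℕ => (f k : ℝ) / k) atTop (𝓝 α))
    (hg : Tendsto (fun k : ℕ => (g k : ℝ) / k) atTop (𝓝 β)) :
    Tendsto (fun k => Hr (f k) - Hr (g k)) atTop (𝓝 (Real.log α - Real.log β)) := by
  have hftop : ∀ (h : ℕ → ℕ) (c : ℝ), 0 < c →
      Tendsto (fun k : ℕ => (h k : ℝ) / k) atTop (𝓝 c) → Tendsto h atTop atTop := by
    intro h c hc hh
    rw [← tendsto_natCast_atTop_iff (R := ℝ)]
    have : Tendsto (fun k : ℕ => ((h k : ℝ) / k) * k) atTop atTop :=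
      Tendsto.pos_mul_atTop hc hh tendsto_natCast_atTop_atTop
    refine this.congr' ?_
    filter_upwards [eventually_ge_atTop 1] with k hk
    have hk0 : (k : ℝ) ≠ 0 := by positivity
    field_simp
  have hfT := hftop f α hα hf
  have hgT := hftop g β hβ hg
  have hHf : Tendsto (fun k => Hr (f k) - Real.log (f k)) atTop (𝓝 eulerMascheroniConstant) :=
    Real.tendsto_harmonic_sub_log.comp hfT
  have hHg : Tendsto (fun k => Hr (g k) - Real.log (g k)) atTop (𝓝 eulerMascheroniConstant) :=
    Real.tendsto_harmonic_sub_log.comp hgT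
  have hlogf : Tendsto (fun k : ℕ => Real.log ((f k : ℝ) / k)) atTop (𝓝 (Real.log α)) :=
    ((Real.continuousAt_log hα.ne').tendsto.comp hf)
  have hlogg : Tendsto (fun k : ℕ => Real.log ((g k : ℝ) / k)) atTop (𝓝 (Real.log β)) :=
    ((Real.continuousAt_log hβ.ne').tendsto.comp hg)
  have key := ((hHf.sub hHg).add (hlogf.sub hlogg))
  have : eulerMascheroniConstant - eulerMascheroniConstant + (Real.log α - Real.log β)
      = Real.log α - Real.log β := by ring
  rw [this] at key
  refine key.congr' ?_
  filter_upwards [eventually_ge_atTop 1, hfT.eventually_ge_atTop 1, hgT.eventually_ge_atTop 1]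
    with k hk hfk hgk
  have hk0 : (k : ℝ) ≠ 0 := by positivity
  have hf0 : (f k : ℝ) ≠ 0 := by
    have : (1:ℕ) ≤ f k := hfk
    positivity
  have hg0 : (g k : ℝ) ≠ 0 := by
    have : (1:ℕ) ≤ g k := hgk
    positivity
  rw [Real.log_div hf0 hk0, Real.log_div hg0 hk0]
  ring

/-- The harmonic-type sums `ζ_k = Σ_{i=1}^{⌊p₂k⌋} 1/(l_i − i + 1)`, where `l_i = ⌊p₂k⌋`
for `i ≤ ⌊p₁k⌋` and `l_i = k` otherwise, converge to
`ln(p₂(1−p₁)/((p₂−p₁)(1−p₂))) = ln(p₂/(p₂−p₁)) + ln((1−p₁)/(1−p₂))` as `k → ∞`. -/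
theorem zeta_tendsto (p₁ p₂ : ℝ) (hp₁ : 0 < p₁) (hp₁₂ : p₁ < p₂) (hp₂ : p₂ < 1) :
    Filter.Tendsto
      (fun k : ℕ =>
        ∑ i ∈ Finset.Icc 1 (⌊p₂ * (k : ℝ)⌋₊),
          (1 : ℝ) /
            (((if i ≤ ⌊p₁ * (k : ℝ)⌋₊ then ⌊p₂ * (k : ℝ)⌋₊ else k) - i + 1 : ℕ) : ℝ))
      Filter.atTop
      (nhds (Real.log (p₂ * (1 - p₁) / ((p₂ - p₁) * (1 - p₂))))) ∧
    Real.log (p₂ * (1 - p₁) / ((p₂ - p₁) * (1 - p₂)))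
      = Real.log (p₂ / (p₂ - p₁)) + Real.log ((1 - p₁) / (1 - p₂)) := by
  have hp₂0 : 0 < p₂ := hp₁.trans hp₁₂
  have hd : 0 < p₂ - p₁ := by linarith
  have h1p₁ : 0 < 1 - p₁ := by linarith
  have h1p₂ : 0 < 1 - p₂ := by linarith
  set a : ℕ → ℕ := fun k => ⌊p₁ * (k : ℝ)⌋₊ with ha_def
  set m : ℕ → ℕ := fun k => ⌊p₂ * (k : ℝ)⌋₊ with hm_def
  have ham : ∀ k, a k ≤ m k := fun k =>
    Nat.floor_mono (by nlinarith [Nat.cast_nonneg (α := ℝ) k])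
  have hmk : ∀ k, m k ≤ k := fun k => by
    have : (⌊p₂ * (k : ℝ)⌋₊ : ℕ) ≤ ⌊(k : ℝ)⌋₊ :=
      Nat.floor_mono (by nlinarith [Nat.cast_nonneg (α := ℝ) k])
    simpa using this
  -- rewrite the sum
  have hsum : ∀ k : ℕ,
      (∑ i ∈ Finset.Icc 1 (m k),
          (1 : ℝ) / (((if i ≤ a k then m k else k) - i + 1 : ℕ) : ℝ))
        = (Hr (m k) - Hr (m k - a k)) + (Hr (k - a k) - Hr (k - m k)) := by
    intro k
    rw [show (1 : ℕ) = 0 + 1 from rfl, Finset.Icc_add_one_left_eq_Ioc,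
      ← Finset.sum_Ioc_consecutive _ (Nat.zero_le (a k)) (ham k)]
    have e1 : ∑ i ∈ Finset.Ioc 0 (a k),
        (1 : ℝ) / (((if i ≤ a k then m k else k) - i + 1 : ℕ) : ℝ)
        = ∑ i ∈ Finset.Ioc 0 (a k), (1 : ℝ) / ((m k - i + 1 : ℕ) : ℝ) := by
      refine Finset.sum_congr rfl fun i hi => ?_
      rw [if_pos (Finset.mem_Ioc.mp hi).2]
    have e2 : ∑ i ∈ Finset.Ioc (a k) (m k),
        (1 : ℝ) / (((if i ≤ a k then m k else k) - i + 1 : ℕ) : ℝ)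
        = ∑ i ∈ Finset.Ioc (a k) (m k), (1 : ℝ) / ((k - i + 1 : ℕ) : ℝ) := by
      refine Finset.sum_congr rfl fun i hi => ?_
      rw [if_neg (not_le.mpr (Finset.mem_Ioc.mp hi).1)]
    rw [e1, e2, sum_Ioc_inv (m k) 0 (a k) (Nat.zero_le _) (ham k),
      sum_Ioc_inv k (a k) (m k) (ham k) (hmk k), Nat.sub_zero]
  -- limits of ratios
  have hA : Tendsto (fun k : ℕ => (a k : ℝ) / k) atTop (𝓝 p₁) := floor_div_tendsto p₁ hp₁
  have hM : Tendsto (fun k : ℕ => (m k : ℝ) / k) atTop (𝓝 p₂) := floor_div_tendsto p₂ hp₂0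
  have hMA : Tendsto (fun k : ℕ => ((m k - a k : ℕ) : ℝ) / k) atTop (𝓝 (p₂ - p₁)) := by
    have := hM.sub hA
    refine this.congr fun k => ?_
    rw [Nat.cast_sub (ham k), sub_div]
  have hKA : Tendsto (fun k : ℕ => ((k - a k : ℕ) : ℝ) / k) atTop (𝓝 (1 - p₁)) := by
    have h1 : Tendsto (fun k : ℕ => 1 - (a k : ℝ) / k) atTop (𝓝 (1 - p₁)) :=
      tendsto_const_nhds.sub hA
    refine h1.congr' ?_
    filter_upwards [eventually_ge_atTop 1] with k hk
    have hk0 : (k : ℝ) ≠ 0 := by positivity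
    rw [Nat.cast_sub ((Nat.floor_mono (by nlinarith [Nat.cast_nonneg (α := ℝ) k]) : a k ≤ ⌊(k:ℝ)⌋₊).trans (by simp)), sub_div, div_self hk0]
  have hKM : Tendsto (fun k : ℕ => ((k - m k : ℕ) : ℝ) / k) atTop (𝓝 (1 - p₂)) := by
    have h1 : Tendsto (fun k : ℕ => 1 - (m k : ℝ) / k) atTop (𝓝 (1 - p₂)) :=
      tendsto_const_nhds.sub hM
    refine h1.congr' ?_
    filter_upwards [eventually_ge_atTop 1] with k hk
    have hk0 : (k : ℝ) ≠ 0 := by positivity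
    rw [Nat.cast_sub (hmk k), sub_div, div_self hk0]
  have T1 := Hr_diff_tendsto m (fun k => m k - a k) p₂ (p₂ - p₁) hp₂0 hd hM hMA
  have T2 := Hr_diff_tendsto (fun k => k - a k) (fun k => k - m k) (1 - p₁) (1 - p₂)
    h1p₁ h1p₂ hKA hKM
  have hlogeq : Real.log (p₂ * (1 - p₁) / ((p₂ - p₁) * (1 - p₂)))
      = (Real.log p₂ - Real.log (p₂ - p₁)) + (Real.log (1 - p₁) - Real.log (1 - p₂)) := by
    rw [Real.log_div (by positivity) (by positivity), Real.log_mul (by positivity) (by positivity),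
      Real.log_mul (by positivity) (by positivity)]
    ring
  constructor
  · rw [hlogeq]
    exact (T1.add T2).congr fun k => (hsum k).symm
  · rw [hlogeq, Real.log_div (by positivity) (by positivity),
      Real.log_div (by positivity) (by positivity)]
end
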